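/- arXiv:0912.1471 — 2 statements merged into one kernel-verified Lean document; each statement's English description precedes it below -/
import Mathlib

section
/- Let f be a continuous map of M = [0,1] into itself. Then every minimal cycle of intervals for f is a proper cycle, i.e. the interiors of its constituent intervals f^i(J), 0 ≤ i ≤ n−1, are pairwise disjoint. -/
open Set MeasureTheory Filter Topology

noncomputable section

/-- The unit interval `M = [0,1]`. -/
abbrev unitI : Set ℝ := Set.Icc 0 1

/-- Data of an interval map: the map `f`, the finite critical set `C`,
the one-sided critical orders `l s c` (`s = true` for the right side `c+`,
`s = false` for the left side `c-`), and the one-sided limit values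
`fv s c = f(c±)`. -/
structure CritData where
  f : ℝ → ℝ
  C : Finset ℝ
  l : Bool → ℝ → ℝ
  fv : Bool → ℝ → ℝ

namespace CritData

variable (D : CritData)

/-- One-sided neighbourhood of `c` of radius `ε`. -/
def sideIoo (s : Bool) (c ε : ℝ) : Set ℝ := if s then Ioo c (c + ε) else Ioo (c - ε) c

/-- The one-sided punctured half line at `c`. -/
def sideSet (s : Bool) (c : ℝ) : Set ℝ := if s then Ioi c else Iio c

/-- `f` is piecewise `C²` with critical set `C`: `C ⊆ M`, `f` maps `M` to `M`,
`f` is `C²` with non-vanishing derivative and injective (a diffeomorphism) on each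
connected component of `M \ C`, has one-sided limits `fv s c` at each `c ∈ C`, and
near each `c ∈ C` the map has one-sided critical order `l s c ∈ [1,∞)`. -/
def IsPiecewiseC2 : Prop :=
  (D.C : Set ℝ) ⊆ unitI ∧ MapsTo D.f unitI unitI ∧
  ContDiffOn ℝ 2 D.f (unitI \ (D.C : Set ℝ)) ∧
  (∀ x ∈ unitI \ (D.C : Set ℝ), deriv D.f x ≠ 0) ∧
  (∀ x ∈ unitI \ (D.C : Set ℝ),
    InjOn D.f (connectedComponentIn (unitI \ (D.C : Set ℝ)) x)) ∧
  ∀ c ∈ D.C, ∀ s : Bool,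
    1 ≤ D.l s c ∧
    Tendsto D.f (𝓝[sideSet s c] c) (𝓝 (D.fv s c)) ∧
    ∃ K₁ K₂ ε : ℝ, 0 < K₁ ∧ K₁ ≤ K₂ ∧ 0 < ε ∧
      ∀ x ∈ sideIoo s c ε,
        (K₁ * |x - c| ^ (D.l s c - 1) ≤ |deriv D.f x| ∧
          |deriv D.f x| ≤ K₂ * |x - c| ^ (D.l s c - 1)) ∧
        (K₁ * |x - c| ^ (D.l s c) ≤ |D.f x - D.fv s c| ∧
          |D.f x - D.fv s c| ≤ K₂ * |x - c| ^ (D.l s c)) ∧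
        (K₁ * |x - c| ^ (D.l s c - 2) ≤ |deriv (deriv D.f) x| ∧
          |deriv (deriv D.f) x| ≤ K₂ * |x - c| ^ (D.l s c - 2))

/-- Negative Schwarzian derivative: `|Df|^{-1/2}` is convex on each connected
component of `M \ C`. -/
def NegSchwarzian : Prop :=
  ∀ x ∈ unitI \ (D.C : Set ℝ),
    ConvexOn ℝ (connectedComponentIn (unitI \ (D.C : Set ℝ)) x)
      (fun y => |deriv D.f y| ^ (-(1 : ℝ) / 2))

/-- `f^n(c)` along the side-`s` orbit of the critical point `c` (for `n ≥ 1`):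
`f^n(c) = f^[n-1](f(c±))`. -/
def fnC (s : Bool) (c : ℝ) (n : ℕ) : ℝ := D.f^[n - 1] (D.fv s c)

/-- `Df^n(f(c))`, the derivative of `f^n` at the (one-sided) critical value `f(c±)`. -/
def DfnFc (s : Bool) (c : ℝ) (n : ℕ) : ℝ := deriv (D.f^[n]) (D.fv s c)

/-- A critical point of `C` closest to `y`. -/
def nearest (y : ℝ) : ℝ :=
  if h : D.C.Nonempty then (D.C.exists_min_image (fun c => |y - c|) h).choose else 0

/-- The critical order `l(c̃)` of the critical point `c̃` nearest to `y`, taken on the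
side of `c̃` on which `y` lies. -/
def lNear (y : ℝ) : ℝ := D.l (decide (D.nearest y ≤ y)) (D.nearest y)

/-- The quantity `( |f^n(c)−c̃|^{l(c̃)} / (|f^n(c)−c̃|^{l(c)} |Df^n(f(c))|) )^e`,
where `c̃` is the critical point closest to `f^n(c)`. -/
def sumTerm (s : Bool) (c : ℝ) (e : ℝ) (n : ℕ) : ℝ :=
  (|D.fnC s c n - D.nearest (D.fnC s c n)| ^ D.lNear (D.fnC s c n) /
    (|D.fnC s c n - D.nearest (D.fnC s c n)| ^ D.l s c * |D.DfnFc s c n|)) ^ e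

/-- Summability condition (I). -/
def CondI : Prop :=
  ∀ c ∈ D.C, ∀ s : Bool,
    Summable fun n : ℕ => D.sumTerm s c (1 / (2 * D.l s c - 1)) (n + 1)

/-- Summability condition (II): `∑ₙ |Df^n(f(c))|^{-1/l(c)} < ∞`. -/
def CondII : Prop :=
  ∀ c ∈ D.C, ∀ s : Bool,
    Summable fun n : ℕ => (1 / |D.DfnFc s c (n + 1)|) ^ (1 / D.l s c)

/-- `γ_n(c)`. -/
def gamma (s : Bool) (c : ℝ) (n : ℕ) : ℝ :=
  min (D.sumTerm s c (1 / (2 * D.l s c - 1)) n) (1 / 2)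

/-- `d_n(c) = min_{1 ≤ i < n} (γ_i(c)/|Df^i(f(c))|)^{1/l(c)} |f^i(c)−c̃|^{l(c̃)/l(c)}`. -/
def dSeq (s : Bool) (c : ℝ) (n : ℕ) : ℝ :=
  sInf {t | ∃ i, 1 ≤ i ∧ i < n ∧
    t = (D.gamma s c i / |D.DfnFc s c i|) ^ (1 / D.l s c) *
      |D.fnC s c i - D.nearest (D.fnC s c i)| ^ (D.lNear (D.fnC s c i) / D.l s c)}

end CritData

/-- `μ` is an acip for `f`: an `f`-invariant Borel probability measure on `M = [0,1]`,
absolutely continuous with respect to Lebesgue measure. -/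
def IsAcip (f : ℝ → ℝ) (μ : Measure ℝ) : Prop :=
  IsProbabilityMeasure μ ∧ μ ≪ volume ∧ μ unitIᶜ = 0 ∧
  ∀ A : Set ℝ, MeasurableSet A → μ (f ⁻¹' A) = μ A

/-- `μ` is ergodic for `f`: every `f`-invariant Borel set has measure `0` or `1`. -/
def IsErgodicFor (f : ℝ → ℝ) (μ : Measure ℝ) : Prop :=
  ∀ A : Set ℝ, MeasurableSet A → f ⁻¹' A = A → μ A = 0 ∨ μ A = 1

/-- `X = ⋃_{i<n} f^i(J)` is a cycle of intervals with generating interval `J`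
(a nontrivial closed interval) and period `n`: `n ≥ 1` is least with `f^n(J) ⊆ J`. -/
def IsCycleWith (f : ℝ → ℝ) (J X : Set ℝ) (n : ℕ) : Prop :=
  (∃ a b : ℝ, a < b ∧ J = Icc a b) ∧ J ⊆ unitI ∧ 1 ≤ n ∧
  f^[n] '' J ⊆ J ∧ (∀ m, 1 ≤ m → m < n → ¬ f^[m] '' J ⊆ J) ∧
  X = ⋃ i ∈ Finset.range n, f^[i] '' J

/-- `X` is a cycle of intervals for `f`. -/
def IsCycle (f : ℝ → ℝ) (X : Set ℝ) : Prop := ∃ J n, IsCycleWith f J X n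

/-- A proper cycle: the interiors of the constituent intervals are pairwise disjoint. -/
def IsProperCycleWith (f : ℝ → ℝ) (J X : Set ℝ) (n : ℕ) : Prop :=
  IsCycleWith f J X n ∧
  ∀ i ∈ Finset.range n, ∀ j ∈ Finset.range n, i ≠ j →
    interior (f^[i] '' J) ∩ interior (f^[j] '' J) = ∅

/-- A minimal cycle: a cycle containing no strictly smaller cycle. -/
def IsMinimalCycle (f : ℝ → ℝ) (X : Set ℝ) : Prop :=
  IsCycle f X ∧ ∀ Y, IsCycle f Y → Y ⊆ X → Y = X

/-- `φ` is Hölder continuous on `X`. -/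
def HolderOnSet (φ : ℝ → ℝ) (X : Set ℝ) : Prop :=
  ∃ C > 0, ∃ a : ℝ, 0 < a ∧ a ≤ 1 ∧ ∀ x ∈ X, ∀ y ∈ X, |φ x - φ y| ≤ C * |x - y| ^ a


namespace S14
open Set Function

def NT (K : Set ℝ) : Prop := ∃ a b : ℝ, a < b ∧ K = Icc a b

lemma iter_cont {f : ℝ → ℝ} (hc : ContinuousOn f unitI) (hm : MapsTo f unitI unitI) :
    ∀ k, ContinuousOn (f^[k]) unitI ∧ MapsTo (f^[k]) unitI unitI := by
  intro k
  induction k with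
  | zero => exact ⟨continuousOn_id, fun x hx => hx⟩
  | succ k ih =>
    rw [Function.iterate_succ']
    exact ⟨hc.comp ih.1 ih.2, hm.comp ih.2⟩

lemma image_add (f : ℝ → ℝ) (a b : ℕ) (J : Set ℝ) :
    f^[a + b] '' J = f^[a] '' (f^[b] '' J) := by
  rw [Function.iterate_add, Set.image_comp]

lemma image_succ (f : ℝ → ℝ) (a : ℕ) (J : Set ℝ) :
    f^[a + 1] '' J = f '' (f^[a] '' J) := by
  rw [Function.iterate_succ', Set.image_comp]


lemma image_interval {f : ℝ → ℝ} (hc : ContinuousOn f unitI) (hm : MapsTo f unitI unitI)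
    {K : Set ℝ} (hK : ∃ a b : ℝ, a ≤ b ∧ K = Icc a b) (hsub : K ⊆ unitI) (k : ℕ) :
    ∃ c d : ℝ, c ≤ d ∧ f^[k] '' K = Icc c d ∧ Icc c d ⊆ unitI := by
  obtain ⟨a, b, hab, rfl⟩ := hK
  have h1 : ContinuousOn (f^[k]) (Icc a b) := (iter_cont hc hm k).1.mono hsub
  have himg := h1.image_Icc hab
  have hne : (f^[k] '' Icc a b).Nonempty := ⟨f^[k] a, ⟨a, ⟨le_refl a, hab⟩, rfl⟩⟩
  rw [himg] at hne
  refine ⟨_, _, ?_, himg, ?_⟩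
  · exact (nonempty_Icc).1 hne
  · rw [← himg]
    rintro x ⟨y, hy, rfl⟩
    exact (iter_cont hc hm k).2 (hsub hy)

variable {f : ℝ → ℝ} {J X : Set ℝ} {n : ℕ}

/-- iterated images of a subset of `X` stay in `X` when `f '' X ⊆ X`. -/
lemma iter_sub_X (hfX : f '' X ⊆ X) {K : Set ℝ} (hKX : K ⊆ X) (k : ℕ) :
    f^[k] '' K ⊆ X := by
  induction k with
  | zero => simpa using hKX
  | succ k ih =>
    rw [image_succ]
    exact (Set.image_mono ih).trans hfX

lemma cyc_J_sub (hcyc : IsCycleWith f J X n) : J ⊆ X := by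
  obtain ⟨-, -, hn, -, -, hX⟩ := hcyc
  rw [hX]
  intro x hx
  exact Set.mem_biUnion (Finset.mem_range.2 hn) (by simpa using hx)

lemma cyc_X_sub_unitI (hc : ContinuousOn f unitI) (hm : MapsTo f unitI unitI)
    (hcyc : IsCycleWith f J X n) : X ⊆ unitI := by
  obtain ⟨-, hJu, -, -, -, hX⟩ := hcyc
  rw [hX]
  rintro x hx
  simp only [Set.mem_iUnion] at hx
  obtain ⟨i, -, y, hy, rfl⟩ := hx
  exact (iter_cont hc hm i).2 (hJu hy)

lemma cyc_fX_sub (hcyc : IsCycleWith f J X n) : f '' X ⊆ X := by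
  obtain ⟨-, -, hn, hper, -, hX⟩ := hcyc
  rw [hX]
  rintro x ⟨y, hy, rfl⟩
  simp only [Set.mem_iUnion] at hy ⊢
  obtain ⟨i, hi, hyi⟩ := hy
  rcases Nat.lt_or_ge (i + 1) n with h | h
  · exact ⟨i + 1, Finset.mem_range.2 h, by rw [image_succ]; exact ⟨y, hyi, rfl⟩⟩
  · have hi' := Finset.mem_range.1 hi
    have hin : i + 1 = n := by omega
    refine ⟨0, Finset.mem_range.2 hn, ?_⟩
    have : f y ∈ f^[n] '' J := by
      rw [← hin, image_succ]; exact ⟨y, hyi, rfl⟩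
    simpa using hper this
lemma cyc_iter_sub (hcyc : IsCycleWith f J X n) (k : ℕ) : f^[k] '' J ⊆ X :=
  iter_sub_X (cyc_fX_sub hcyc) (cyc_J_sub hcyc) k

/-- periodic shift: `A (k+n) ⊆ A k`. -/
lemma cyc_shift (hcyc : IsCycleWith f J X n) (k : ℕ) :
    f^[k + n] '' J ⊆ f^[k] '' J := by
  rw [image_add]
  exact Set.image_mono hcyc.2.2.2.1

/-- reduce exponent by multiples of n: `A (k + t*n) ⊆ A k`. -/
lemma cyc_shift_mul (hcyc : IsCycleWith f J X n) (k t : ℕ) :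
    f^[k + t * n] '' J ⊆ f^[k] '' J := by
  induction t with
  | zero => simp
  | succ t ih =>
    have : k + (t + 1) * n = (k + t * n) + n := by ring
    rw [this]
    exact (cyc_shift hcyc (k + t * n)).trans ih

/-- The fundamental minimality tool: any nontrivial periodic closed interval inside `X`
generates (via its least period) a cycle equal to `X`. -/
lemma build_cycle (hmin : IsMinimalCycle f X) (hXu : X ⊆ unitI) (hfX : f '' X ⊆ X)
    {K : Set ℝ} (hKX : K ⊆ X) (hKnt : NT K) {N : ℕ} (hN : 1 ≤ N) (hper : f^[N] '' K ⊆ K) :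
    ∃ p, 1 ≤ p ∧ p ≤ N ∧
      IsCycleWith f K (⋃ i ∈ Finset.range p, f^[i] '' K) p ∧
      (⋃ i ∈ Finset.range p, f^[i] '' K) = X := by
  classical
  have hex : ∃ p, 1 ≤ p ∧ f^[p] '' K ⊆ K := ⟨N, hN, hper⟩
  set p := Nat.find hex with hp
  obtain ⟨hp1, hpper⟩ := Nat.find_spec hex
  have hpN : p ≤ N := Nat.find_min' hex ⟨hN, hper⟩
  have hleast : ∀ m, 1 ≤ m → m < p → ¬ f^[m] '' K ⊆ K := by
    intro m hm1 hmp hmper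
    exact (Nat.find_min hex hmp) ⟨hm1, hmper⟩
  have hcycK : IsCycleWith f K (⋃ i ∈ Finset.range p, f^[i] '' K) p :=
    ⟨hKnt, hKX.trans hXu, hp1, hpper, hleast, rfl⟩
  have hYX : (⋃ i ∈ Finset.range p, f^[i] '' K) ⊆ X := by
    intro x hx
    simp only [Set.mem_iUnion] at hx
    obtain ⟨i, -, hxi⟩ := hx
    exact iter_sub_X hfX hKX i hxi
  exact ⟨p, hp1, hpN, hcycK, hmin.2 _ ⟨K, p, hcycK⟩ hYX⟩


/-- No-collapse: in a minimal cycle, iterated images of a nontrivial periodic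
closed interval remain nontrivial. -/
lemma no_collapse (hc : ContinuousOn f unitI) (hm : MapsTo f unitI unitI)
    (hmin : IsMinimalCycle f X) (hXu : X ⊆ unitI) (hfX : f '' X ⊆ X)
    {K : Set ℝ} (hKX : K ⊆ X) (hKnt : NT K) {N : ℕ} (hN : 1 ≤ N)
    (hper : f^[N] '' K ⊆ K) : ∀ t, NT (f^[t] '' K) := by
  intro t
  induction t with
  | zero => simpa using hKnt
  | succ t ih =>
    by_contra hcol
    -- K' := f^[t] '' K is a nontrivial closed interval
    obtain ⟨γ, γ', hγ, hK'⟩ := ih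
    set K' : Set ℝ := f^[t] '' K with hK'def
    have hK'X : K' ⊆ X := iter_sub_X hfX hKX t
    have hK'per : f^[N] '' K' ⊆ K' := by
      rw [hK'def, ← image_add]
      rw [show N + t = t + N by ring, image_add]
      exact Set.image_mono hper
    -- f '' K' is a singleton {z}
    obtain ⟨c, d, hcd, himg, hsub⟩ := image_interval hc hm
      ⟨γ, γ', le_of_lt hγ, hK'⟩ (hK'X.trans hXu) 1
    have himg1 : f '' K' = Icc c d := by
      rw [← himg]; rw [show f^[1] = f from Function.iterate_one f]
    have hcd' : c = d := by
      by_contra hne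
      exact hcol ⟨c, d, lt_of_le_of_ne hcd hne, by rw [image_succ, ← himg1]⟩
    set z := c with hz
    have hfK' : f '' K' = {z} := by rw [himg1, ← hcd']; simp
    -- iterates of K' are singletons
    have hiter : ∀ q, f^[q + 1] '' K' = {f^[q] z} := by
      intro q
      rw [show q + 1 = q + 1 from rfl, image_add, show f^[1] = f from Function.iterate_one f,
        hfK', Set.image_singleton]
    -- the return point w ∈ K'
    set w := f^[N - 1] z with hw
    have hwK' : w ∈ K' := by
      have : f^[N] '' K' = {w} := by
        have : N = (N - 1) + 1 := by omega
        rw [this, hiter]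
      rw [this] at hK'per
      exact hK'per rfl
    rw [hK'] at hwK' hK'X
    -- choose a proper nontrivial subinterval K'' of K' containing w,
    -- together with a "free" open interval inside K' disjoint from K''
    set mid := (γ + γ') / 2 with hmid
    have hγmid : γ < mid := by rw [hmid]; linarith
    have hmidγ' : mid < γ' := by rw [hmid]; linarith
    obtain ⟨K'', free, hK''nt, hK''sub, hwK'', hfree_sub, hfree_inf, hfree_disj⟩ :
        ∃ (K'' free : Set ℝ), NT K'' ∧ K'' ⊆ Icc γ γ' ∧ w ∈ K'' ∧
          free ⊆ Icc γ γ' ∧ free.Infinite ∧ ∀ x ∈ free, x ∉ K'' := by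
      rcases le_or_gt w mid with hcase | hcase
      · refine ⟨Icc γ mid, Ioo mid γ', ⟨γ, mid, hγmid, rfl⟩,
          Icc_subset_Icc le_rfl (le_of_lt hmidγ'), ⟨hwK'.1, hcase⟩,
          (Ioo_subset_Icc_self).trans (Icc_subset_Icc (le_of_lt hγmid) le_rfl),
          Set.Ioo_infinite hmidγ', ?_⟩
        rintro x ⟨hx1, -⟩ ⟨-, hx2⟩
        exact absurd hx2 (not_le.2 hx1)
      · refine ⟨Icc mid γ', Ioo γ mid, ⟨mid, γ', hmidγ', rfl⟩,
          Icc_subset_Icc (le_of_lt hγmid) le_rfl, ⟨le_of_lt hcase, hwK'.2⟩,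
          (Ioo_subset_Icc_self).trans (Icc_subset_Icc le_rfl (le_of_lt hmidγ')),
          Set.Ioo_infinite hγmid, ?_⟩
        rintro x ⟨-, hx1⟩ ⟨hx2, -⟩
        exact absurd hx2 (not_le.2 hx1)
    -- K'' is N-periodic: f^[N] '' K'' = {w} ⊆ K''
    have hfK'' : f '' K'' = {z} := by
      apply Set.Subset.antisymm
      · rw [← hfK']
        exact Set.image_mono (by rw [hK']; exact hK''sub)
      · obtain ⟨a0, b0, hab0, hK''⟩ := hK''nt
        intro y hy
        rw [Set.mem_singleton_iff] at hy
        have : f a0 ∈ f '' K'' := ⟨a0, by rw [hK'']; exact ⟨le_rfl, le_of_lt hab0⟩, rfl⟩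
        have h2 : f a0 ∈ f '' K' := (Set.image_mono (by rw [hK']; exact hK''sub)) this
        rw [hfK', Set.mem_singleton_iff] at h2
        rw [hy, ← h2]; exact this
    have hK''per : f^[N] '' K'' ⊆ K'' := by
      have : f^[N] '' K'' = {w} := by
        have hN' : N = (N - 1) + 1 := by omega
        rw [hN', image_add, show f^[1] = f from Function.iterate_one f, hfK'',
          Set.image_singleton]
      rw [this]
      simpa using hwK''
    -- build the cycle of K'' and use minimality
    have hK''X : K'' ⊆ X := fun x hx => hK'X (hK''sub hx)
    obtain ⟨p, hp1, hpN, hcycK'', hYX⟩ :=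
      build_cycle hmin hXu hfX hK''X hK''nt hN hK''per
    -- X = K'' ∪ finite set
    set F : Set ℝ := (fun i => f^[i] z) '' {i : ℕ | i < p} with hF
    have hFfin : F.Finite := (Set.finite_lt_nat p).image _
    have hXsub : X ⊆ K'' ∪ F := by
      rw [← hYX]
      intro x hx
      simp only [Set.mem_iUnion] at hx
      obtain ⟨i, hi, hxi⟩ := hx
      rcases Nat.eq_zero_or_pos i with rfl | hipos
      · left; simpa using hxi
      · right
        have hgen : ∀ q, f^[q + 1] '' K'' = {f^[q] z} := by
          intro q
          rw [image_add, show f^[1] = f from Function.iterate_one f, hfK'',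
            Set.image_singleton]
        have hi' : i = (i - 1) + 1 := by omega
        rw [hi', hgen (i - 1), Set.mem_singleton_iff] at hxi
        have hilt := Finset.mem_range.1 hi
        exact ⟨i - 1, by simp only [Set.mem_setOf_eq]; omega, hxi.symm⟩
    -- contradiction: free is infinite but avoid K'' and is inside X = K'' ∪ F
    have hfree_in : free ⊆ F := by
      intro x hx
      have hxX : x ∈ X := hK'X (hfree_sub hx)
      rcases hXsub hxX with h | h
      · exact absurd h (hfree_disj x hx)
      · exact h
    exact (hfree_inf.mono hfree_in) hFfin


lemma nt_of_int_overlap {a b c d : ℝ}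
    (h : (interior (Icc a b) ∩ interior (Icc c d)).Nonempty) :
    NT (Icc a b ∩ Icc c d) := by
  rw [interior_Icc, interior_Icc] at h
  obtain ⟨x, ⟨hx1, hx2⟩, hx3, hx4⟩ := h
  refine ⟨a ⊔ c, b ⊓ d, ?_, Icc_inter_Icc⟩
  have h1 : a ⊔ c < x := sup_lt_iff.2 ⟨hx1, hx3⟩
  have h2 : x < b ⊓ d := lt_inf_iff.2 ⟨hx2, hx4⟩
  exact h1.trans h2

lemma int_overlap_of_nt {A B : Set ℝ} (h : NT (A ∩ B)) :
    (interior A ∩ interior B).Nonempty := by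
  obtain ⟨p, q, hpq, heq⟩ := h
  rw [← interior_inter, heq, interior_Icc]
  exact ⟨(p + q) / 2, by constructor <;> [linarith; linarith]⟩


lemma nt_of_nt_subset {C : Set ℝ} {u v : ℝ} (hC : NT C) (hsub : C ⊆ Icc u v) :
    u < v := by
  obtain ⟨p, q, hpq, rfl⟩ := hC
  have h1 := hsub ⟨le_refl p, le_of_lt hpq⟩
  have h2 := hsub ⟨le_of_lt hpq, le_refl q⟩
  exact lt_of_lt_of_le (lt_of_le_of_lt h1.1 hpq) h2.2

/-- Lemma R : any interior-overlapping pair of the cycle yields a nontrivial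
intersection `J ∩ f^[s] '' J` with `1 ≤ s < n`. -/
lemma lemmaR (hc : ContinuousOn f unitI) (hm : MapsTo f unitI unitI)
    (hcyc : IsCycleWith f J X n) (hmin : IsMinimalCycle f X)
    {i j : ℕ} (hj : j < n) (hij : i < j)
    (hov : (interior (f^[i] '' J) ∩ interior (f^[j] '' J)).Nonempty) :
    NT (J ∩ f^[j - i] '' J) := by
  have hXu := cyc_X_sub_unitI hc hm hcyc
  have hfX := cyc_fX_sub hcyc
  have hJnt : ∃ a b : ℝ, a ≤ b ∧ J = Icc a b := by
    obtain ⟨a, b, hab, hJ⟩ := hcyc.1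
    exact ⟨a, b, le_of_lt hab, hJ⟩
  have hJu := hcyc.2.1
  obtain ⟨ai, bi, hi1, hi2, hi3⟩ := image_interval hc hm hJnt hJu i
  obtain ⟨aj, bj, hj1, hj2, hj3⟩ := image_interval hc hm hJnt hJu j
  -- W := A_i ∩ A_j is nontrivial
  have hWnt : NT (f^[i] '' J ∩ f^[j] '' J) := by
    rw [hi2, hj2]
    exact nt_of_int_overlap (by rw [← hi2, ← hj2]; exact hov)
  set W := f^[i] '' J ∩ f^[j] '' J with hW
  have hWX : W ⊆ X := fun x hx => cyc_iter_sub hcyc i hx.1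
  -- W is n-periodic
  have hWper : f^[n] '' W ⊆ W := by
    intro x hx
    obtain ⟨y, hy, rfl⟩ := hx
    constructor
    · have : f^[n] y ∈ f^[n] '' (f^[i] '' J) := ⟨y, hy.1, rfl⟩
      rw [← image_add, show n + i = i + n by ring] at this
      exact cyc_shift hcyc i this
    · have : f^[n] y ∈ f^[n] '' (f^[j] '' J) := ⟨y, hy.2, rfl⟩
      rw [← image_add, show n + j = j + n by ring] at this
      exact cyc_shift hcyc j this
  have hn1 : 1 ≤ n := hcyc.2.2.1
  -- push forward by n - i
  have hpush := no_collapse hc hm hmin hXu hfX hWX hWnt hn1 hWper (n - i)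
  have hsub1 : f^[n - i] '' W ⊆ J ∩ f^[j - i] '' J := by
    intro x hx
    obtain ⟨y, hy, rfl⟩ := hx
    constructor
    · have : f^[n - i] y ∈ f^[n - i] '' (f^[i] '' J) := ⟨y, hy.1, rfl⟩
      rw [← image_add] at this
      have hni : n - i + i = n := by omega
      rw [hni] at this
      have h0 : f^[n] '' J ⊆ f^[0] '' J := by
        have := cyc_shift hcyc 0
        simpa using this
      simpa using h0 this
    · have : f^[n - i] y ∈ f^[n - i] '' (f^[j] '' J) := ⟨y, hy.2, rfl⟩
      rw [← image_add] at this
      have hni : n - i + j = (j - i) + n := by omega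
      rw [hni] at this
      exact cyc_shift hcyc (j - i) this
  -- conclude
  obtain ⟨as_, bs, hs1, hs2, hs3⟩ := image_interval hc hm hJnt hJu (j - i)
  obtain ⟨a, b, hab, hJe⟩ := hcyc.1
  have hform : J ∩ f^[j - i] '' J = Icc (a ⊔ as_) (b ⊓ bs) := by
    rw [hs2, hJe, Icc_inter_Icc]
  have hlt : a ⊔ as_ < b ⊓ bs := by
    apply nt_of_nt_subset hpush
    rw [← hform]
    exact hsub1
  exact ⟨a ⊔ as_, b ⊓ bs, hlt, hform⟩


/-- The family of nontrivial closed `n`-periodic subintervals of `J`. -/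
def Wfam (f : ℝ → ℝ) (J : Set ℝ) (n : ℕ) : Set (Set ℝ) :=
  {K | NT K ∧ K ⊆ J ∧ f^[n] '' K ⊆ K}

lemma X_eq_union (hmin : IsMinimalCycle f X) (hXu : X ⊆ unitI) (hfX : f '' X ⊆ X)
    {K : Set ℝ} (hKX : K ⊆ X) (hKnt : NT K) (hn : 1 ≤ n) (hper : f^[n] '' K ⊆ K) :
    X = ⋃ q ∈ Finset.range n, f^[q] '' K := by
  obtain ⟨p, hp1, hpn, hcycp, hXp⟩ := build_cycle hmin hXu hfX hKX hKnt hn hper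
  apply Set.Subset.antisymm
  · rw [← hXp]
    intro x hx
    simp only [Set.mem_iUnion] at hx ⊢
    obtain ⟨i, hi, hxi⟩ := hx
    exact ⟨i, Finset.mem_range.2 (lt_of_lt_of_le (Finset.mem_range.1 hi) hpn), hxi⟩
  · intro x hx
    simp only [Set.mem_iUnion] at hx
    obtain ⟨i, -, hxi⟩ := hx
    exact iter_sub_X hfX hKX i hxi

lemma chain_finset_min {c : Set (Set ℝ)} (hchain : IsChain (· ⊆ ·) c) :
    ∀ s : Finset (Set ℝ), ↑s ⊆ c → s.Nonempty → ∃ m ∈ s, ∀ K ∈ s, m ⊆ K := by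
  classical
  intro s
  induction s using Finset.induction_on with
  | empty => intro _ h; exact absurd h (by simp)
  | @insert a s ha ih =>
    intro hsub hne
    have hac : a ∈ c := hsub (by simp)
    rcases s.eq_empty_or_nonempty with rfl | hsne
    · exact ⟨a, by simp, by simp⟩
    · obtain ⟨m, hm, hmle⟩ := ih (fun K hK => hsub (by simp [hK])) hsne
      have hmc : m ∈ c := hsub (by simp [hm])
      rcases hchain.total hac hmc with h | h
      · refine ⟨a, by simp, ?_⟩
        intro K hK
        rcases Finset.mem_insert.1 hK with rfl | hK
        · exact le_refl _
        · exact h.trans (hmle K hK)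
      · refine ⟨m, by simp [hm], ?_⟩
        intro K hK
        rcases Finset.mem_insert.1 hK with rfl | hK
        · exact h
        · exact hmle K hK

/-- Zorn: below any member of `Wfam` there is a minimal member. -/
lemma exists_min_W (hc : ContinuousOn f unitI) (hm : MapsTo f unitI unitI)
    (hcyc : IsCycleWith f J X n) (hmin : IsMinimalCycle f X)
    {W₀ : Set ℝ} (hW₀ : W₀ ∈ Wfam f J n) :
    ∃ W ∈ Wfam f J n, W ⊆ W₀ ∧ ∀ K ∈ Wfam f J n, K ⊆ W → K = W := by
  classical
  have hXu := cyc_X_sub_unitI hc hm hcyc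
  have hfX := cyc_fX_sub hcyc
  have hJX := cyc_J_sub hcyc
  have hn := hcyc.2.2.1
  obtain ⟨a, b, hab, hJe⟩ := hcyc.1
  have H : ∀ c ⊆ Wfam f J n, IsChain (· ⊆ ·) c → c.Nonempty →
      ∃ lb ∈ Wfam f J n, ∀ s ∈ c, lb ⊆ s := by
    intro c hcsub hchain hcne
    haveI : Nonempty c := hcne.to_subtype
    set T := ⋂₀ c with hTdef
    have hTsub : ∀ K ∈ c, T ⊆ K := fun K hK => sInter_subset_of_mem hK
    have hTJ : T ⊆ J := by
      obtain ⟨K, hK⟩ := hcne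
      exact (hTsub K hK).trans (hcsub hK).2.1
    have hTper : f^[n] '' T ⊆ T := by
      rintro x ⟨y, hy, rfl⟩
      rw [Set.mem_sInter]
      intro K hK
      exact (hcsub hK).2.2 ⟨y, Set.mem_sInter.1 hy K hK, rfl⟩
    have hKcpt : ∀ K ∈ c, IsCompact K := by
      intro K hK; obtain ⟨p, q, hpq, rfl⟩ := (hcsub hK).1; exact isCompact_Icc
    have hKne : ∀ K ∈ c, K.Nonempty := by
      intro K hK; obtain ⟨p, q, hpq, rfl⟩ := (hcsub hK).1
      exact nonempty_Icc.2 (le_of_lt hpq)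
    have hKcl : ∀ K ∈ c, IsClosed K := fun K hK => (hKcpt K hK).isClosed
    have hdir : DirectedOn (· ⊇ ·) c := by
      intro K hK K' hK'
      rcases hchain.total hK hK' with h | h
      · exact ⟨K, hK, le_refl _, h⟩
      · exact ⟨K', hK', h, le_refl _⟩
    have hTne : T.Nonempty :=
      IsCompact.nonempty_sInter_of_directed_nonempty_isCompact_isClosed hdir hKne hKcpt hKcl
    have hTcl : IsClosed T := isClosed_sInter hKcl
    have hTcpt : IsCompact T := by
      have hsubJ : T ⊆ Icc a b := by rw [← hJe]; exact hTJ
      exact IsCompact.of_isClosed_subset isCompact_Icc hTcl hsubJ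
    have hTord : Set.OrdConnected T := by
      apply Set.ordConnected_sInter
      intro K hK
      obtain ⟨p, q, hpq, rfl⟩ := (hcsub hK).1
      exact ordConnected_Icc
    have hTIcc : T = Icc (sInf T) (sSup T) :=
      eq_Icc_of_connected_compact ⟨hTne, hTord.isPreconnected⟩ hTcpt
    -- nontriviality of T
    have hTnt : sInf T < sSup T := by
      by_contra hcon
      push_neg at hcon
      have heq : sInf T = sSup T := by
        have : sInf T ≤ sSup T := by
          obtain ⟨y, hy⟩ := hTne
          rw [hTIcc] at hy
          exact hy.1.trans hy.2
        exact le_antisymm this hcon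
      set z := sInf T with hzdef
      have hTz : T = {z} := by
        rw [hTIcc, ← heq, Icc_self]
      -- pick x ∈ X avoiding the orbit of z
      set G : Set ℝ := (fun q => f^[q] z) '' {q : ℕ | q < n} with hGdef
      have hGfin : G.Finite := (Set.finite_lt_nat n).image _
      obtain ⟨x, hxJ, hxG⟩ : ∃ x, x ∈ Icc a b ∧ x ∉ G := by
        have := (Set.Icc_infinite hab).diff hGfin
        obtain ⟨x, hx⟩ := this.nonempty
        exact ⟨x, hx.1, hx.2⟩
      have hxX : x ∈ X := hJX (hJe ▸ hxJ)
      have hcov : ∀ K ∈ c, X = ⋃ q ∈ Finset.range n, f^[q] '' K := by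
        intro K hK
        exact X_eq_union hmin hXu hfX ((hcsub hK).2.1.trans hJX) (hcsub hK).1 hn
          (hcsub hK).2.2
      -- pigeonhole: some q works cofinally
      set Bad : ℕ → Prop := fun q => ∃ K ∈ c, ∀ K' ∈ c, K' ⊆ K → x ∉ f^[q] '' K' with hBdef
      have hnotall : ¬ ∀ q : Fin n, Bad q := by
        intro hall
        choose Kq hKqc hKqprop using hall
        have hnne : (0 : ℕ) < n := hn
        set s : Finset (Set ℝ) := Finset.univ.image Kq with hsdef
        have hssub : ↑s ⊆ c := by
          intro K hK
          simp only [hsdef, Finset.coe_image, Set.mem_image] at hK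
          obtain ⟨q, -, rfl⟩ := hK
          exact hKqc q
        have hsne : s.Nonempty := by
          refine ⟨Kq ⟨0, hnne⟩, ?_⟩
          simp [hsdef]
        obtain ⟨m, hms, hmle⟩ := chain_finset_min hchain s hssub hsne
        have hmc : m ∈ c := hssub hms
        have hxcov := hcov m hmc
        rw [hxcov] at hxX
        simp only [Set.mem_iUnion] at hxX
        obtain ⟨q₀, hq₀, hxq₀⟩ := hxX
        have hq₀n := Finset.mem_range.1 hq₀
        have hKq₀s : Kq ⟨q₀, hq₀n⟩ ∈ s := by simp [hsdef]
        exact hKqprop ⟨q₀, hq₀n⟩ m hmc (hmle _ hKq₀s) hxq₀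
      push_neg at hnotall
      obtain ⟨⟨qs, hqs⟩, hqsprop⟩ := hnotall
      -- for every K in the chain there is K' ⊆ K with x ∈ f^[qs] '' K'
      have hcof : ∀ K ∈ c, ∃ K' ∈ c, K' ⊆ K ∧ x ∈ f^[qs] '' K' := by
        intro K hK
        by_contra hcon
        push_neg at hcon
        exact hqsprop ⟨K, hK, fun K' hK' hsubKK => hcon K' hK' hsubKK⟩
      -- hence x is in every f^[qs] '' K, and by compactness x = f^[qs] z
      set S : Set (Set ℝ) := (fun K => K ∩ f^[qs] ⁻¹' {x}) '' c with hSdef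
      haveI : Nonempty S := by
        obtain ⟨K, hK⟩ := hcne
        exact ⟨⟨_, ⟨K, hK, rfl⟩⟩⟩
      have hSprop : ∀ D ∈ S, D.Nonempty ∧ IsCompact D ∧ IsClosed D := by
        rintro D ⟨K, hK, rfl⟩
        have hKu : K ⊆ unitI := (hcsub hK).2.1.trans hcyc.2.1
        have hclosed : IsClosed (K ∩ f^[qs] ⁻¹' {x}) :=
          ContinuousOn.preimage_isClosed_of_isClosed
            ((iter_cont hc hm qs).1.mono hKu) (hKcl K hK) isClosed_singleton
        refine ⟨?_, ?_, hclosed⟩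
        · obtain ⟨K', hK', hsub', y, hy, hfy⟩ := hcof K hK
          exact ⟨y, hsub' hy, by simp [hfy]⟩
        · exact IsCompact.of_isClosed_subset (hKcpt K hK) hclosed inter_subset_left
      have hSdir : DirectedOn (· ⊇ ·) S := by
        rintro D ⟨K, hK, rfl⟩ D' ⟨K', hK', rfl⟩
        rcases hchain.total hK hK' with h | h
        · exact ⟨_, ⟨K, hK, rfl⟩, le_refl _,
            Set.inter_subset_inter_left _ h⟩
        · exact ⟨_, ⟨K', hK', rfl⟩, Set.inter_subset_inter_left _ h, le_refl _⟩
      have hSne : (⋂₀ S).Nonempty :=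
        IsCompact.nonempty_sInter_of_directed_nonempty_isCompact_isClosed hSdir
          (fun D hD => (hSprop D hD).1) (fun D hD => (hSprop D hD).2.1)
          (fun D hD => (hSprop D hD).2.2)
      obtain ⟨y, hy⟩ := hSne
      have hyT : y ∈ T := by
        rw [Set.mem_sInter]
        intro K hK
        exact (Set.mem_sInter.1 hy _ ⟨K, hK, rfl⟩).1
      have hfy : f^[qs] y = x := by
        obtain ⟨K, hK⟩ := hcne
        have := (Set.mem_sInter.1 hy _ ⟨K, hK, rfl⟩).2
        simpa using this
      rw [hTz, Set.mem_singleton_iff] at hyT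
      exact hxG ⟨qs, hqs, by rw [← hyT]; exact hfy⟩
    exact ⟨T, ⟨⟨sInf T, sSup T, hTnt, hTIcc⟩, hTJ, hTper⟩, hTsub⟩
  obtain ⟨m, hmW₀, hmmem, hmmin⟩ := zorn_superset_nonempty (Wfam f J n) H W₀ hW₀
  exact ⟨m, hmmem, hmW₀, fun K hK hKm => le_antisymm hKm (hmmin hK hKm)⟩


lemma touch_subsingleton {a b c d : ℝ}
    (hdisj : Ioo a b ∩ Ioo c d = ∅) : (Icc a b ∩ Ioo c d).Subsingleton := by
  intro x hx y hy
  by_contra hxy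
  wlog hlt : x < y generalizing x y
  · exact this hy hx (Ne.symm hxy) (lt_of_le_of_ne (not_lt.1 hlt) (Ne.symm hxy))
  have hsub : Ioo x y ⊆ Ioo a b ∩ Ioo c d := by
    intro t ht
    exact ⟨⟨lt_of_le_of_lt hx.1.1 ht.1, lt_of_lt_of_le ht.2 hy.1.2⟩,
      ⟨lt_trans hx.2.1 ht.1, lt_trans ht.2 hy.2.2⟩⟩
  obtain ⟨t, ht⟩ := nonempty_Ioo.2 hlt
  exact absurd (hsub ht) (by rw [hdisj]; exact fun h => h)

lemma icc_sub_closure_diff {α β : ℝ} (hab : α < β) {F : Set ℝ} (hF : F.Finite) :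
    Icc α β ⊆ closure (Ioo α β \ F) := by
  have h1 : Ioo α β ⊆ closure (Ioo α β \ F) := by
    intro x hx
    rw [mem_closure_iff]
    intro o ho hxo
    obtain ⟨ε, hε, hball⟩ := Metric.isOpen_iff.1 ho x hxo
    set l := max α (x - ε) with hl
    set u := min β (x + ε) with hu
    have hlu : l < u := by
      have h1 : α < x := hx.1
      have h2 : x < β := hx.2
      simp only [hl, hu, max_lt_iff, lt_min_iff]
      exact ⟨⟨by linarith, by linarith⟩, ⟨by linarith, by linarith⟩⟩
    have hIsub : Ioo l u ⊆ o ∩ Ioo α β := by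
      intro t ht
      constructor
      · apply hball
        rw [Real.ball_eq_Ioo]
        exact ⟨lt_of_le_of_lt (le_max_right _ _) ht.1,
          lt_of_lt_of_le ht.2 (min_le_right _ _)⟩
      · exact ⟨lt_of_le_of_lt (le_max_left _ _) ht.1,
          lt_of_lt_of_le ht.2 (min_le_left _ _)⟩
    obtain ⟨t, ht⟩ := ((Set.Ioo_infinite hlu).diff hF).nonempty
    exact ⟨t, (hIsub ht.1).1, (hIsub ht.1).2, ht.2⟩
  calc Icc α β = closure (Ioo α β) := (closure_Ioo (ne_of_lt hab)).symm
  _ ⊆ closure (closure (Ioo α β \ F)) := closure_mono h1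
  _ = closure (Ioo α β \ F) := closure_closure

section Tiling

/-- multiples of the period fix the generator (as an upper bound). -/
lemma per_mul {B : Set ℝ} {σ : ℕ} (hper : f^[σ] '' B ⊆ B) (t : ℕ) :
    f^[σ * t] '' B ⊆ B := by
  induction t with
  | zero => simp
  | succ t ih =>
    have : σ * (t + 1) = σ + σ * t := by ring
    rw [this, image_add]
    exact (Set.image_mono ih).trans hper

lemma tile_mod {B : Set ℝ} {σ : ℕ} (hσ : 1 ≤ σ) (hper : f^[σ] '' B ⊆ B) (k : ℕ) :
    f^[k] '' B ⊆ f^[k % σ] '' B := by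
  conv_lhs => rw [show k = k % σ + σ * (k / σ) from (Nat.mod_add_div k σ).symm]
  rw [image_add]
  exact Set.image_mono (per_mul hper _)

/-- mod arithmetic helper -/
lemma mod_eq_imp_dvd {q r σ : ℕ} (hσ : 1 ≤ σ) (hr : r < σ) (h : (q + r) % σ = r) :
    σ ∣ q := by
  have hm : q % σ < σ := Nat.mod_lt _ hσ
  have key : (q + r) % σ = (q % σ + r) % σ := by
    rw [Nat.add_mod, Nat.mod_eq_of_lt hr]
  rw [key] at h
  rcases Nat.lt_or_ge (q % σ + r) σ with hlt | hge
  · rw [Nat.mod_eq_of_lt hlt] at h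
    exact Nat.dvd_of_mod_eq_zero (by omega)
  · have h3 : q % σ + r - σ < σ := by omega
    rw [Nat.mod_eq_sub_mod hge, Nat.mod_eq_of_lt h3] at h
    exfalso
    omega

/-- THE PATTERN LEMMA : in a minimal cycle with a "proper tiling" presentation,
any periodic nontrivial interval inside a tile generates (by the return map) the whole tile. -/
lemma pattern (hc : ContinuousOn f unitI) (hm : MapsTo f unitI unitI)
    (hmin : IsMinimalCycle f X) (hXu : X ⊆ unitI) (hfX : f '' X ⊆ X)
    {B : Set ℝ} {σ : ℕ} (hσ : 1 ≤ σ) (hBX : B ⊆ X)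
    (hper : f^[σ] '' B ⊆ B)
    (hntil : ∀ q, NT (f^[q] '' B))
    (hdisj : ∀ i < σ, ∀ j < σ, i ≠ j →
      interior (f^[i] '' B) ∩ interior (f^[j] '' B) = ∅)
    (hcover : X = ⋃ q ∈ Finset.range σ, f^[q] '' B)
    {r : ℕ} (hr : r < σ) {K : Set ℝ} (hKnt : NT K) (hKsub : K ⊆ f^[r] '' B)
    {τ : ℕ} (hτ : 1 ≤ τ) (hKper : f^[σ * τ] '' K ⊆ K) :
    f^[r] '' B ⊆ ⋃ t ∈ Finset.range τ, f^[σ * t] '' K := by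
  have htileX : ∀ q, f^[q] '' B ⊆ X := fun q => iter_sub_X hfX hBX q
  have hKX : K ⊆ X := hKsub.trans (htileX r)
  have hστ : 1 ≤ σ * τ := Nat.one_le_iff_ne_zero.2 (by positivity)
  have hXK : X = ⋃ q ∈ Finset.range (σ * τ), f^[q] '' K :=
    X_eq_union hmin hXu hfX hKX hKnt hστ hKper
  obtain ⟨α, β, hαβ, htile_r⟩ := hntil r
  -- finite exceptional set
  set F : Set ℝ := ⋃ q ∈ (Finset.range σ).erase r, (f^[q] '' B ∩ Ioo α β) with hFdef
  have hFfin : F.Finite := by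
    apply Set.Finite.biUnion (Finset.finite_toSet _)
    intro q hq
    obtain ⟨aq, bq, habq, htq⟩ := hntil q
    have hqr := Finset.mem_erase.1 hq
    have hdq := hdisj q (Finset.mem_range.1 hqr.2) r hr hqr.1
    rw [htq, htile_r, interior_Icc, interior_Icc] at hdq
    rw [htq]
    exact (touch_subsingleton hdq).finite
  -- main inclusion into the union
  have hD : Ioo α β \ F ⊆ ⋃ t ∈ Finset.range τ, f^[σ * t] '' K := by
    intro x hx
    have hxX : x ∈ X := htileX r (by rw [htile_r]; exact Ioo_subset_Icc_self hx.1)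
    rw [hXK] at hxX
    simp only [Set.mem_iUnion] at hxX
    obtain ⟨q, hq, hxq⟩ := hxX
    have hq' := Finset.mem_range.1 hq
    have hxtile : x ∈ f^[(q + r) % σ] '' B := by
      apply tile_mod hσ hper (q + r)
      have hsub2 : f^[q] '' K ⊆ f^[q + r] '' B := by
        rw [image_add]
        exact Set.image_mono hKsub
      exact hsub2 hxq
    have hmod : (q + r) % σ = r := by
      by_contra hne
      have hmem : x ∈ F := by
        rw [hFdef]
        apply Set.mem_biUnion (Finset.mem_erase.2 ⟨hne, Finset.mem_range.2 (Nat.mod_lt _ hσ)⟩)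
        exact ⟨hxtile, hx.1⟩
      exact hx.2 hmem
    obtain ⟨t, rfl⟩ := mod_eq_imp_dvd hσ hr hmod
    have htτ : t < τ := by
      by_contra hge
      push_neg at hge
      have : σ * τ ≤ σ * t := Nat.mul_le_mul_left _ hge
      omega
    exact Set.mem_biUnion (Finset.mem_range.2 htτ) hxq
  -- the union is closed
  have hUclosed : IsClosed (⋃ t ∈ Finset.range τ, f^[σ * t] '' K) := by
    apply Set.Finite.isClosed_biUnion (Finset.finite_toSet _)
    intro t _
    obtain ⟨ka, kb, hkab, hKe⟩ := hKnt
    have : IsCompact (f^[σ * t] '' K) := by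
      apply IsCompact.image_of_continuousOn
      · rw [hKe]; exact isCompact_Icc
      · exact (iter_cont hc hm (σ * t)).1.mono (hKX.trans hXu)
    exact this.isClosed
  -- conclude by density
  rw [htile_r]
  intro y hy
  have := icc_sub_closure_diff hαβ hFfin hy
  have hcl : closure (Ioo α β \ F) ⊆ ⋃ t ∈ Finset.range τ, f^[σ * t] '' K := by
    rw [← hUclosed.closure_eq]
    exact closure_mono hD
  exact hcl this

end Tiling


/-- rigid walks on `{0,...,σ-1}`: an injective ±1-step walk is monotone. -/
lemma walk_rigid {σ : ℕ} (φ : ℕ → ℕ) (hlt : ∀ k < σ, φ k < σ)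
    (hinj : ∀ k < σ, ∀ l < σ, φ k = φ l → k = l)
    (hstep : ∀ k, k + 1 < σ → φ (k + 1) = φ k + 1 ∨ φ k = φ (k + 1) + 1) :
    (∀ k < σ, φ k = k) ∨ (∀ k < σ, φ k = σ - 1 - k) := by
  rcases Nat.lt_or_ge σ 2 with hσ2 | hσ2
  · left
    intro k hk
    have := hlt k hk
    omega
  · have h1σ : 1 < σ := hσ2
    rcases hstep 0 (by omega) with hup | hdown
    · left
      have hup' : φ 1 = φ 0 + 1 := by simpa using hup
      have hasc : ∀ k, k < σ → φ k = φ 0 + k := by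
        intro k
        induction k using Nat.strong_induction_on with
        | _ k ih =>
        intro hk
        rcases Nat.lt_or_ge k 2 with hk2 | hk2
        · interval_cases k
          · omega
          · omega
        · have h1 : φ (k - 1) = φ 0 + (k - 1) := ih (k - 1) (by omega) (by omega)
          have h2 : φ (k - 2) = φ 0 + (k - 2) := ih (k - 2) (by omega) (by omega)
          have hs := hstep (k - 1) (by omega)
          rw [show k - 1 + 1 = k by omega] at hs
          rcases hs with h | h
          · omega
          · exfalso
            have heq : φ k = φ (k - 2) := by omega
            have := hinj k hk (k - 2) (by omega) heq
            omega
      have h0 : φ 0 = 0 := by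
        have := hasc (σ - 1) (by omega)
        have := hlt (σ - 1) (by omega)
        omega
      intro k hk
      have := hasc k hk
      omega
    · right
      have hdown' : φ 0 = φ 1 + 1 := by simpa using hdown
      have hdesc : ∀ k, k < σ → φ k + k = φ 0 := by
        intro k
        induction k using Nat.strong_induction_on with
        | _ k ih =>
        intro hk
        rcases Nat.lt_or_ge k 2 with hk2 | hk2
        · interval_cases k
          · omega
          · omega
        · have h1 : φ (k - 1) + (k - 1) = φ 0 := ih (k - 1) (by omega) (by omega)
          have h2 : φ (k - 2) + (k - 2) = φ 0 := ih (k - 2) (by omega) (by omega)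
          have hs := hstep (k - 1) (by omega)
          rw [show k - 1 + 1 = k by omega] at hs
          rcases hs with h | h
          · exfalso
            have heq : φ k = φ (k - 2) := by omega
            have := hinj k hk (k - 2) (by omega) heq
            omega
          · omega
      have h0 : φ 0 = σ - 1 := by
        have hn : ¬ (φ 0 + 1 < σ) := by
          intro h
          have := hdesc (φ 0 + 1) h
          omega
        have := hlt 0 (by omega)
        omega
      intro k hk
      have := hdesc k hk
      omega


/-- helper: successor mod σ is injective below σ. -/
lemma succ_mod_inj {σ i j : ℕ} (hi : i < σ) (hj : j < σ) (hij : i ≠ j) :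
    (i + 1) % σ ≠ (j + 1) % σ := by
  have h1 : (i + 1) % σ = if i + 1 = σ then 0 else i + 1 := by
    split
    · next h => rw [h, Nat.mod_self]
    · next h => exact Nat.mod_eq_of_lt (by omega)
  have h2 : (j + 1) % σ = if j + 1 = σ then 0 else j + 1 := by
    split
    · next h => rw [h, Nat.mod_self]
    · next h => exact Nat.mod_eq_of_lt (by omega)
  rw [h1, h2]
  split <;> split <;> omega

/-- THE INTERVAL-TILING LEMMA: a cyclically mapped proper tiling of an interval
has at most two tiles. -/
lemma phi_bound (F : ℝ → ℝ) {σ : ℕ} (hσ : 1 ≤ σ) (α β : ℕ → ℝ)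
    (hab : ∀ q < σ, α q < β q) {u v : ℝ}
    (hcover : Icc u v = ⋃ q ∈ Finset.range σ, Icc (α q) (β q))
    (hdisj : ∀ i < σ, ∀ j < σ, i ≠ j → Ioo (α i) (β i) ∩ Ioo (α j) (β j) = ∅)
    (hstep : ∀ q < σ, F '' Icc (α q) (β q) ⊆ Icc (α ((q + 1) % σ)) (β ((q + 1) % σ))) :
    σ ≤ 2 := by
  classical
  by_contra hσ3
  push_neg at hσ3
  have hsub : ∀ q < σ, Icc (α q) (β q) ⊆ Icc u v := by
    intro q hq
    intro x hx
    rw [hcover]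
    exact Set.mem_biUnion (Finset.mem_range.2 hq) hx
  have hbnd : ∀ q < σ, u ≤ α q ∧ β q ≤ v := by
    intro q hq
    have h1 := hsub q hq ⟨le_refl _, (hab q hq).le⟩
    have h2 := hsub q hq ⟨(hab q hq).le, le_refl _⟩
    exact ⟨h1.1, h2.2⟩
  -- comparability of tiles
  have hcomp : ∀ i < σ, ∀ j < σ, i ≠ j → β i ≤ α j ∨ β j ≤ α i := by
    intro i hi j hj hij
    by_contra hcon
    push_neg at hcon
    obtain ⟨h1, h2⟩ := hcon
    set t := (max (α i) (α j) + min (β i) (β j)) / 2 with ht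
    have hmm : max (α i) (α j) < min (β i) (β j) := by
      simp only [max_lt_iff, lt_min_iff]
      exact ⟨⟨hab i hi, h1⟩, ⟨h2, hab j hj⟩⟩
    have htmem : t ∈ Ioo (α i) (β i) ∩ Ioo (α j) (β j) := by
      constructor
      · constructor
        · calc α i ≤ max (α i) (α j) := le_max_left _ _
          _ < t := by rw [ht]; linarith
        · calc t < min (β i) (β j) := by rw [ht]; linarith
          _ ≤ β i := min_le_left _ _
      · constructor
        · calc α j ≤ max (α i) (α j) := le_max_right _ _
          _ < t := by rw [ht]; linarith
        · calc t < min (β i) (β j) := by rw [ht]; linarith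
          _ ≤ β j := min_le_right _ _
    rw [hdisj i hi j hj hij] at htmem
    exact htmem
  have hainj : ∀ i < σ, ∀ j < σ, i ≠ j → α i ≠ α j := by
    intro i hi j hj hij
    rcases hcomp i hi j hj hij with h | h
    · exact ne_of_lt (lt_of_lt_of_le (hab i hi) h)
    · exact (ne_of_lt (lt_of_lt_of_le (hab j hj) h)).symm
  -- the spatial rank
  set rank : ℕ → ℕ := fun i => ((Finset.range σ).filter (fun l => α l < α i)).card
    with hrankdef
  have hrmono : ∀ i < σ, ∀ j < σ, α i < α j → rank i < rank j := by
    intro i hi j hj hij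
    apply Finset.card_lt_card
    constructor
    · intro l hl
      rw [Finset.mem_filter] at hl ⊢
      exact ⟨hl.1, lt_trans hl.2 hij⟩
    · intro hcon
      have : i ∈ (Finset.range σ).filter (fun l => α l < α i) :=
        hcon (Finset.mem_filter.2 ⟨Finset.mem_range.2 hi, hij⟩)
      exact absurd (Finset.mem_filter.1 this).2 (lt_irrefl _)
  have hrlt : ∀ i < σ, rank i < σ := by
    intro i hi
    have h1 : ((Finset.range σ).filter (fun l => α l < α i)).card ≤
        ((Finset.range σ).erase i).card := by
      apply Finset.card_le_card
      intro l hl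
      rw [Finset.mem_filter] at hl
      rw [Finset.mem_erase]
      refine ⟨?_, hl.1⟩
      intro heq
      rw [heq] at hl
      exact absurd hl.2 (lt_irrefl _)
    have h2 := Finset.card_erase_of_mem (Finset.mem_range.2 hi)
    rw [Finset.card_range] at h2
    calc rank i ≤ _ := h1
    _ = σ - 1 := h2
    _ < σ := by omega
  have hrinj : ∀ i < σ, ∀ j < σ, rank i = rank j → i = j := by
    intro i hi j hj heq
    by_contra hij
    rcases lt_trichotomy (α i) (α j) with h | h | h
    · exact absurd heq (ne_of_lt (hrmono i hi j hj h))
    · exact hainj i hi j hj hij h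
    · exact absurd heq.symm (ne_of_lt (hrmono j hj i hi h))
  have hrsurj : ∀ k, k < σ → ∃ i, i < σ ∧ rank i = k := by
    intro k hk
    have hcard : ((Finset.range σ).image rank).card = σ := by
      rw [Finset.card_image_of_injOn, Finset.card_range]
      intro i hi j hj
      exact hrinj i (Finset.mem_range.1 hi) j (Finset.mem_range.1 hj)
    have hsub2 : (Finset.range σ).image rank ⊆ Finset.range σ := by
      intro m hm
      rw [Finset.mem_image] at hm
      obtain ⟨i, hi, rfl⟩ := hm
      exact Finset.mem_range.2 (hrlt i (Finset.mem_range.1 hi))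
    have heq : (Finset.range σ).image rank = Finset.range σ :=
      Finset.eq_of_subset_of_card_le hsub2 (by rw [hcard, Finset.card_range])
    have : k ∈ (Finset.range σ).image rank := by rw [heq]; exact Finset.mem_range.2 hk
    rw [Finset.mem_image] at this
    obtain ⟨i, hi, hri⟩ := this
    exact ⟨i, Finset.mem_range.1 hi, hri⟩
  -- adjacency increments rank
  have hadj : ∀ i < σ, ∀ j < σ, i ≠ j → β i = α j → rank j = rank i + 1 := by
    intro i hi j hj hij hba
    have hfe : (Finset.range σ).filter (fun l => α l < α j) =
        insert i ((Finset.range σ).filter (fun l => α l < α i)) := by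
      ext l
      simp only [Finset.mem_filter, Finset.mem_insert, Finset.mem_range]
      constructor
      · rintro ⟨hlσ, hlt⟩
        by_cases hli : l = i
        · exact Or.inl hli
        · right
          refine ⟨hlσ, ?_⟩
          rcases hcomp l hlσ i hi hli with h | h
          · exact lt_of_lt_of_le (hab l hlσ) h
          · exfalso
            rw [← hba] at hlt
            linarith
      · rintro (rfl | ⟨hlσ, hlt⟩)
        · refine ⟨hi, ?_⟩
          rw [← hba]
          exact hab _ hi
        · refine ⟨hlσ, ?_⟩
          have hij2 : α i < α j := by
            rw [← hba]; exact hab i hi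
          exact lt_trans hlt hij2
    have hni : i ∉ (Finset.range σ).filter (fun l => α l < α i) := by
      intro hcon
      exact absurd (Finset.mem_filter.1 hcon).2 (lt_irrefl _)
    show ((Finset.range σ).filter (fun l => α l < α j)).card = rank i + 1
    rw [hfe, Finset.card_insert_of_notMem hni]
  -- existence of the next tile to the right
  have hnext : ∀ i < σ, β i < v → ∃ j, j < σ ∧ j ≠ i ∧ α j = β i := by
    intro i hi hbv
    by_contra hno
    push_neg at hno
    set T : Finset ℝ :=
      insert v (((Finset.range σ).filter (fun j => β i < α j)).image α) with hT
    have hTne : T.Nonempty := ⟨v, Finset.mem_insert_self _ _⟩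
    set cm := T.min' hTne with hcm
    have hcgt : β i < cm := by
      rw [hcm, Finset.lt_min'_iff]
      intro y hy
      rw [hT, Finset.mem_insert] at hy
      rcases hy with rfl | hy
      · exact hbv
      · rw [Finset.mem_image] at hy
        obtain ⟨j, hj, rfl⟩ := hy
        exact (Finset.mem_filter.1 hj).2
    have hclev : cm ≤ v := Finset.min'_le _ _ (Finset.mem_insert_self _ _)
    set y := (β i + cm) / 2 with hy
    have hy1 : β i < y := by rw [hy]; linarith
    have hy2 : y < cm := by rw [hy]; linarith
    have hymem : y ∈ Icc u v := by
      constructor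
      · have := (hbnd i hi).1
        have := hab i hi
        linarith
      · linarith
    rw [hcover] at hymem
    simp only [Set.mem_iUnion] at hymem
    obtain ⟨l, hl, hyl⟩ := hymem
    have hlσ := Finset.mem_range.1 hl
    have hαl : α l ≤ β i := by
      by_contra hcon
      push_neg at hcon
      have : α l ∈ T := by
        rw [hT]
        apply Finset.mem_insert_of_mem
        exact Finset.mem_image_of_mem _ (Finset.mem_filter.2 ⟨hl, hcon⟩)
      have := Finset.min'_le T _ this
      rw [← hcm] at this
      linarith [hyl.1]
    have hβl : β i < β l := lt_of_lt_of_le hy1 hyl.2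
    have hli : l ≠ i := fun h => absurd hβl (by rw [h]; exact lt_irrefl _)
    have hαlne : α l ≠ β i := hno l hlσ hli
    have hαlt : α l < β i := lt_of_le_of_ne hαl hαlne
    -- interior overlap of tiles l and i
    set t := (max (α i) (α l) + β i) / 2 with htdef
    have hmax : max (α i) (α l) < β i := max_lt (hab i hi) hαlt
    have : t ∈ Ioo (α i) (β i) ∩ Ioo (α l) (β l) := by
      constructor
      · constructor
        · calc α i ≤ max (α i) (α l) := le_max_left _ _
          _ < t := by rw [htdef]; linarith
        · rw [htdef]; linarith
      · constructor
        · calc α l ≤ max (α i) (α l) := le_max_right _ _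
          _ < t := by rw [htdef]; linarith
        · calc t < β i := by rw [htdef]; linarith
          _ < β l := hβl
    rw [hdisj i hi l hlσ (Ne.symm hli)] at this
    exact this
  -- the last tile
  have hlast : ∀ i < σ, β i = v → rank i = σ - 1 := by
    intro i hi hbv
    have hfe : (Finset.range σ).filter (fun l => α l < α i) = (Finset.range σ).erase i := by
      ext l
      simp only [Finset.mem_filter, Finset.mem_erase, Finset.mem_range]
      constructor
      · rintro ⟨hlσ, hlt⟩
        exact ⟨fun h => absurd hlt (by rw [h]; exact lt_irrefl _), hlσ⟩
      · rintro ⟨hli, hlσ⟩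
        refine ⟨hlσ, ?_⟩
        rcases hcomp l hlσ i hi hli with h | h
        · exact lt_of_lt_of_le (hab l hlσ) h
        · exfalso
          have := (hbnd l hlσ).2
          rw [hbv] at h
          linarith [hab l hlσ]
    show ((Finset.range σ).filter (fun l => α l < α i)).card = σ - 1
    rw [hfe, Finset.card_erase_of_mem (Finset.mem_range.2 hi), Finset.card_range]
  -- rank inverse
  set c : ℕ → ℕ := fun k => if h : k < σ then (hrsurj k h).choose else 0 with hcdef
  have hclt : ∀ k < σ, c k < σ := by
    intro k hk
    rw [hcdef]
    simp only [dif_pos hk]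
    exact (hrsurj k hk).choose_spec.1
  have hcrank : ∀ k < σ, rank (c k) = k := by
    intro k hk
    rw [hcdef]
    simp only [dif_pos hk]
    exact (hrsurj k hk).choose_spec.2
  -- successor map
  set S : ℕ → ℕ := fun i => (i + 1) % σ with hSdef
  have hSlt : ∀ i, S i < σ := fun i => Nat.mod_lt _ hσ
  -- adjacency of images
  have hSadj : ∀ i < σ, ∀ j < σ, i ≠ j → β i = α j →
      (β (S i) = α (S j) ∨ β (S j) = α (S i)) := by
    intro i hi j hj hij hba
    have hx1 : β i ∈ Icc (α i) (β i) := ⟨(hab i hi).le, le_refl _⟩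
    have hx2 : β i ∈ Icc (α j) (β j) := ⟨le_of_eq hba.symm, by rw [hba]; exact (hab j hj).le⟩
    have hF1 : F (β i) ∈ Icc (α (S i)) (β (S i)) := hstep i hi ⟨β i, hx1, rfl⟩
    have hF2 : F (β i) ∈ Icc (α (S j)) (β (S j)) := hstep j hj ⟨β i, hx2, rfl⟩
    have hSij : S i ≠ S j := succ_mod_inj hi hj hij
    rcases hcomp (S i) (hSlt i) (S j) (hSlt j) hSij with h | h
    · left
      have := hF1.2
      have := hF2.1
      linarith
    · right
      have := hF2.2
      have := hF1.1
      linarith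
  -- the walk
  set φ : ℕ → ℕ := fun k => rank (S (c k)) with hφdef
  have hφlt : ∀ k < σ, φ k < σ := fun k hk => hrlt _ (hSlt _)
  have hφinj : ∀ k < σ, ∀ l < σ, φ k = φ l → k = l := by
    intro k hk l hl heq
    have h1 : S (c k) = S (c l) :=
      hrinj _ (hSlt _) _ (hSlt _) heq
    by_contra hkl
    have hckl : c k ≠ c l := by
      intro hcon
      have := hcrank k hk
      rw [hcon, hcrank l hl] at this
      exact hkl this.symm
    exact succ_mod_inj (hclt k hk) (hclt l hl) hckl h1
  have hφstep : ∀ k, k + 1 < σ → φ (k + 1) = φ k + 1 ∨ φ k = φ (k + 1) + 1 := by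
    intro k hk1
    have hk : k < σ := by omega
    set i := c k with hi
    set j := c (k + 1) with hj
    have hiσ := hclt k hk
    have hjσ := hclt (k + 1) hk1
    have hri : rank i = k := hcrank k hk
    have hrj : rank j = k + 1 := hcrank (k + 1) hk1
    -- β i < v since rank i = k < σ - 1
    have hbiv : β i < v := by
      rcases lt_or_eq_of_le (hbnd i hiσ).2 with h | h
      · exact h
      · exfalso
        have := hlast i hiσ h
        omega
    obtain ⟨j', hj'σ, hj'i, hj'α⟩ := hnext i hiσ hbiv
    have hrj' : rank j' = k + 1 := by
      rw [hadj i hiσ j' hj'σ (Ne.symm hj'i) hj'α.symm, hri]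
    have hjj' : j' = j := hrinj j' hj'σ j hjσ (by rw [hrj', hrj])
    have hba : β i = α j := by rw [← hjj', hj'α]
    have hij : i ≠ j := by rw [← hjj']; exact Ne.symm hj'i
    rcases hSadj i hiσ j hjσ hij hba with h | h
    · left
      show rank (S (c (k+1))) = rank (S (c k)) + 1
      rw [← hi, ← hj]
      exact hadj (S i) (hSlt i) (S j) (hSlt j) (succ_mod_inj hiσ hjσ hij) h
    · right
      show rank (S (c k)) = rank (S (c (k+1))) + 1
      rw [← hi, ← hj]
      exact hadj (S j) (hSlt j) (S i) (hSlt i)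
        (Ne.symm (succ_mod_inj hiσ hjσ hij)) h
  -- conclude via walk rigidity
  rcases walk_rigid φ hφlt hφinj hφstep with hid | hrev
  · -- identity: S has a fixed point, σ = 1
    have h0 : (0 : ℕ) < σ := by omega
    have hφ0 : φ 0 = 0 := hid 0 h0
    have hfix : S (c 0) = c 0 := by
      apply hrinj _ (hSlt _) _ (hclt 0 h0)
      have hdef : rank (S (c 0)) = φ 0 := rfl
      rw [hdef, hφ0, hcrank 0 h0]
    have hc0 := hclt 0 h0
    rw [hSdef] at hfix
    simp only at hfix
    rcases Nat.lt_or_ge (c 0 + 1) σ with h | h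
    · rw [Nat.mod_eq_of_lt h] at hfix
      omega
    · have : c 0 + 1 = σ := by omega
      rw [this, Nat.mod_self] at hfix
      omega
  · -- reversal: S ∘ S = id, σ ≤ 2
    have hSS : ∀ k < σ, S (c k) = c (σ - 1 - k) := by
      intro k hk
      apply hrinj _ (hSlt _) _ (hclt _ (by omega))
      have hdef : rank (S (c k)) = φ k := rfl
      rw [hdef, hrev k hk, hcrank _ (by omega)]
    have h0 : (0 : ℕ) < σ := by omega
    have h1 : S (c 0) = c (σ - 1) := by
      have := hSS 0 h0
      simpa using this
    have h2 : S (c (σ - 1)) = c 0 := by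
      have := hSS (σ - 1) (by omega)
      rw [show σ - 1 - (σ - 1) = 0 by omega] at this
      exact this
    have hSS0 : S (S (c 0)) = c 0 := by rw [h1, h2]
    have hc0 := hclt 0 h0
    rw [hSdef] at hSS0
    simp only at hSS0
    rw [Nat.mod_add_mod] at hSS0
    rcases Nat.lt_or_ge (c 0 + 1 + 1) σ with h | h
    · rw [Nat.mod_eq_of_lt h] at hSS0
      omega
    · rcases Nat.lt_or_ge (c 0 + 1 + 1) (σ + 1) with h' | h'
      · have : c 0 + 1 + 1 = σ := by omega
        rw [this, Nat.mod_self] at hSS0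
        omega
      · have heq : c 0 + 1 + 1 = σ + 1 := by omega
        rw [heq] at hSS0
        have : (σ + 1) % σ = 1 := by
          rw [Nat.add_mod_left]
          exact Nat.mod_eq_of_lt (by omega)
        rw [this] at hSS0
        omega


section TileCor

/-- each tile of a proper presentation is a minimal cycle for the return map `f^[σ]`. -/
lemma tile_minimal (hc : ContinuousOn f unitI) (hm : MapsTo f unitI unitI)
    (hmin : IsMinimalCycle f X) (hXu : X ⊆ unitI) (hfX : f '' X ⊆ X)
    {B : Set ℝ} {σ : ℕ} (hσ : 1 ≤ σ) (hBX : B ⊆ X)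
    (hper : f^[σ] '' B ⊆ B) (hntil : ∀ q, NT (f^[q] '' B))
    (hdisj : ∀ i < σ, ∀ j < σ, i ≠ j →
      interior (f^[i] '' B) ∩ interior (f^[j] '' B) = ∅)
    (hcover : X = ⋃ q ∈ Finset.range σ, f^[q] '' B)
    {r : ℕ} (hr : r < σ) :
    IsMinimalCycle (f^[σ]) (f^[r] '' B) ∧ (f^[σ]) '' (f^[r] '' B) ⊆ f^[r] '' B := by
  have hTX : f^[r] '' B ⊆ X := iter_sub_X hfX hBX r
  have hTu : f^[r] '' B ⊆ unitI := hTX.trans hXu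
  have hgT : (f^[σ]) '' (f^[r] '' B) ⊆ f^[r] '' B := by
    rw [← image_add, show σ + r = r + σ by ring, image_add]
    exact Set.image_mono hper
  have hcycT : IsCycleWith (f^[σ]) (f^[r] '' B) (f^[r] '' B) 1 := by
    refine ⟨hntil r, hTu, le_refl 1, ?_, ?_, ?_⟩
    · rw [Function.iterate_one]
      exact hgT
    · intro m hm1 hm2
      omega
    · simp
  refine ⟨⟨⟨_, 1, hcycT⟩, ?_⟩, hgT⟩
  intro Y hY hYT
  obtain ⟨K, τ, hcycK⟩ := hY
  obtain ⟨hKnt, hKu, hτ1, hKper, hKleast, hYdef⟩ := hcycK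
  have hKY : K ⊆ Y := cyc_J_sub ⟨hKnt, hKu, hτ1, hKper, hKleast, hYdef⟩
  have hKT : K ⊆ f^[r] '' B := hKY.trans hYT
  have hKper' : f^[σ * τ] '' K ⊆ K := by
    rw [Function.iterate_mul]
    exact hKper
  have hpat := pattern hc hm hmin hXu hfX hσ hBX hper hntil hdisj hcover hr hKnt hKT
    hτ1 hKper'
  apply Set.Subset.antisymm hYT
  calc f^[r] '' B ⊆ ⋃ t ∈ Finset.range τ, f^[σ * t] '' K := hpat
  _ = ⋃ t ∈ Finset.range τ, (f^[σ])^[t] '' K := by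
      apply Set.iUnion_congr
      intro t
      rw [Function.iterate_mul]
  _ = Y := hYdef.symm

/-- rigidity: the return map is "onto" on each tile. -/
lemma tile_rigid (hc : ContinuousOn f unitI) (hm : MapsTo f unitI unitI)
    (hmin : IsMinimalCycle f X) (hXu : X ⊆ unitI) (hfX : f '' X ⊆ X)
    {B : Set ℝ} {σ : ℕ} (hσ : 1 ≤ σ) (hBX : B ⊆ X)
    (hper : f^[σ] '' B ⊆ B) (hntil : ∀ q, NT (f^[q] '' B))
    (hdisj : ∀ i < σ, ∀ j < σ, i ≠ j →
      interior (f^[i] '' B) ∩ interior (f^[j] '' B) = ∅)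
    (hcover : X = ⋃ q ∈ Finset.range σ, f^[q] '' B)
    {r : ℕ} (hr : r < σ) (t : ℕ) :
    f^[σ * t] '' (f^[r] '' B) = f^[r] '' B := by
  set K := f^[σ * t] '' (f^[r] '' B) with hKdef
  have hKe : K = f^[σ * t + r] '' B := by rw [hKdef, ← image_add]
  have hKnt : NT K := by rw [hKe]; exact hntil _
  have hKsub : K ⊆ f^[r] '' B := by
    rw [hKe, show σ * t + r = r + σ * t by ring, image_add]
    exact Set.image_mono (per_mul hper t)
  have hKper : f^[σ * 1] '' K ⊆ K := by
    rw [hKe, mul_one, ← image_add, show σ + (σ * t + r) = (σ * t + r) + σ by ring,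
      image_add]
    exact Set.image_mono hper
  have hpat := pattern hc hm hmin hXu hfX hσ hBX hper hntil hdisj hcover hr hKnt hKsub
    (le_refl 1) hKper
  apply Set.Subset.antisymm _ _
  · exact hKsub
  · calc f^[r] '' B ⊆ ⋃ t' ∈ Finset.range 1, f^[σ * t'] '' K := hpat
    _ = K := by simp
  
/-- exactness: `f^[k]` maps tile `r` onto tile `(r+k) % σ`. -/
lemma tile_exact (hc : ContinuousOn f unitI) (hm : MapsTo f unitI unitI)
    (hmin : IsMinimalCycle f X) (hXu : X ⊆ unitI) (hfX : f '' X ⊆ X)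
    {B : Set ℝ} {σ : ℕ} (hσ : 1 ≤ σ) (hBX : B ⊆ X)
    (hper : f^[σ] '' B ⊆ B) (hntil : ∀ q, NT (f^[q] '' B))
    (hdisj : ∀ i < σ, ∀ j < σ, i ≠ j →
      interior (f^[i] '' B) ∩ interior (f^[j] '' B) = ∅)
    (hcover : X = ⋃ q ∈ Finset.range σ, f^[q] '' B)
    {r : ℕ} (hr : r < σ) (k : ℕ) :
    f^[k] '' (f^[r] '' B) = f^[(r + k) % σ] '' B := by
  have h1 : f^[k] '' (f^[r] '' B) = f^[k + r] '' B := by rw [← image_add]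
  have h2 : k + r = σ * ((k + r) / σ) + (k + r) % σ := (Nat.div_add_mod _ _).symm
  rw [h1]
  conv_lhs => rw [h2]
  rw [image_add]
  rw [tile_rigid hc hm hmin hXu hfX hσ hBX hper hntil hdisj hcover
    (Nat.mod_lt _ hσ) ((k + r) / σ)]
  rw [Nat.add_comm r k]

end TileCor


/-- the inductive hypothesis package -/
def IHpack (n : ℕ) : Prop :=
  ∀ p, p < n → ∀ g : ℝ → ℝ, ContinuousOn g unitI → MapsTo g unitI unitI →
    ∀ K Y : Set ℝ, IsCycleWith g K Y p → IsMinimalCycle g Y →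
    ∀ i, i < p → ∀ j, j < p → i ≠ j →
      interior (g^[i] '' K) ∩ interior (g^[j] '' K) = ∅

/-- Case A : X is a nontrivial interval. -/
lemma caseA {f : ℝ → ℝ} {J X : Set ℝ} {n : ℕ} (IH : IHpack n)
    (hc : ContinuousOn f unitI) (hm : MapsTo f unitI unitI)
    (hcyc : IsCycleWith f J X n) (hmin : IsMinimalCycle f X)
    {s : ℕ} (hs1 : 1 ≤ s) (hsn : s < n) (hW₀ : NT (J ∩ f^[s] '' J))
    (hXnt : NT X) : False := by
  classical
  have hXu := cyc_X_sub_unitI hc hm hcyc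
  have hfX := cyc_fX_sub hcyc
  have hJX := cyc_J_sub hcyc
  have hn1 : 1 ≤ n := hcyc.2.2.1
  have hn2 : 2 ≤ n := by omega
  obtain ⟨a, b, hab, hJe⟩ := hcyc.1
  have hJnt : NT J := ⟨a, b, hab, hJe⟩
  have hJu := hcyc.2.1
  have hAsper : f^[n] '' (f^[s] '' J) ⊆ f^[s] '' J := by
    rw [← image_add, show n + s = s + n by ring, image_add]
    exact Set.image_mono hcyc.2.2.2.1
  have hW₀per : f^[n] '' (J ∩ f^[s] '' J) ⊆ J ∩ f^[s] '' J := by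
    rintro x ⟨y, hy, rfl⟩
    exact ⟨hcyc.2.2.2.1 ⟨y, hy.1, rfl⟩, hAsper ⟨y, hy.2, rfl⟩⟩
  have hW₀mem : J ∩ f^[s] '' J ∈ Wfam f J n := ⟨hW₀, Set.inter_subset_left, hW₀per⟩
  -- the Zorn-minimal periodic interval
  obtain ⟨W, hWmem, hWW₀, hWminimal⟩ := exists_min_W hc hm hcyc hmin hW₀mem
  obtain ⟨hWnt, hWJ, hWper⟩ := hWmem
  have hWX : W ⊆ X := hWJ.trans hJX
  obtain ⟨σ, hσ1, hσn, hcycW, hXW⟩ := build_cycle hmin hXu hfX hWX hWnt hn1 hWper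
  have hWcycX : IsCycleWith f W X σ := by rw [← hXW]; exact hcycW
  have hntil : ∀ q, NT (f^[q] '' W) :=
    no_collapse hc hm hmin hXu hfX hWX hWnt hn1 hWper
  have hperσ : f^[σ] '' W ⊆ W := hcycW.2.2.2.1
  -- (W, σ) is proper
  have hdisjW : ∀ i, i < σ → ∀ j, j < σ → i ≠ j →
      interior (f^[i] '' W) ∩ interior (f^[j] '' W) = ∅ := by
    by_contra hcon
    push_neg at hcon
    obtain ⟨i', hi', j', hj', hij', hovW⟩ := hcon
    have hovW' := hovW
    obtain ⟨d, hd1, hdσ, hR⟩ : ∃ d, 1 ≤ d ∧ d < σ ∧ NT (W ∩ f^[d] '' W) := by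
      rcases lt_or_gt_of_ne hij' with hlt | hgt
      · exact ⟨j' - i', by omega, by omega,
          lemmaR hc hm hWcycX hmin hj' hlt hovW'⟩
      · refine ⟨i' - j', by omega, by omega, ?_⟩
        apply lemmaR hc hm hWcycX hmin hi' hgt
        rw [Set.inter_comm] at hovW'
        exact hovW'
    -- W ∩ f^[d] '' W is in the family, so equals W by minimality
    have hWd_per : f^[n] '' (W ∩ f^[d] '' W) ⊆ W ∩ f^[d] '' W := by
      rintro x ⟨y, hy, rfl⟩
      constructor
      · exact hWper ⟨y, hy.1, rfl⟩
      · have : f^[n] '' (f^[d] '' W) ⊆ f^[d] '' W := by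
          rw [← image_add, show n + d = d + n by ring, image_add]
          exact Set.image_mono hWper
        exact this ⟨y, hy.2, rfl⟩
    have hWdmem : W ∩ f^[d] '' W ∈ Wfam f J n :=
      ⟨hR, Set.inter_subset_left.trans hWJ, hWd_per⟩
    have heq := hWminimal _ hWdmem Set.inter_subset_left
    have hWsub : W ⊆ f^[d] '' W := by
      intro x hx
      rw [← heq] at hx
      exact hx.2
    have hcontra : f^[σ - d] '' W ⊆ W := by
      calc f^[σ - d] '' W ⊆ f^[σ - d] '' (f^[d] '' W) := Set.image_mono hWsub
      _ = f^[σ] '' W := by rw [← image_add, show σ - d + d = σ by omega]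
      _ ⊆ W := hperσ
    exact hcycW.2.2.2.2.1 (σ - d) (by omega) (by omega) hcontra
  -- σ = 1 is impossible
  rcases eq_or_lt_of_le hσ1 with hσeq | hσge2
  · have hXeqW : W = X := by
      rw [← hXW, ← hσeq]
      simp
    have hJeqX : J = X := Set.Subset.antisymm hJX (by rw [← hXeqW]; exact hWJ)
    have hcontra : f^[1] '' J ⊆ J := by
      rw [Function.iterate_one, hJeqX]
      exact hfX
    exact hcyc.2.2.2.2.1 1 (le_refl 1) (by omega) hcontra
  -- φ-lemma : σ ≤ 2, so σ = 2
  have hσ2 : σ = 2 := by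
    choose α β hαβ hTeq using hntil
    obtain ⟨u, v, huv, hXe⟩ := hXnt
    have hcovφ : Icc u v = ⋃ q ∈ Finset.range σ, Icc (α q) (β q) := by
      rw [← hXe, ← hXW]
      exact Set.iUnion_congr fun q => Set.iUnion_congr fun _ => hTeq q
    have hdisjφ : ∀ i < σ, ∀ j < σ, i ≠ j →
        Ioo (α i) (β i) ∩ Ioo (α j) (β j) = ∅ := by
      intro i hi j hj hij
      have := hdisjW i hi j hj hij
      rw [hTeq i, hTeq j, interior_Icc, interior_Icc] at this
      exact this
    have hstepφ : ∀ q < σ, f '' Icc (α q) (β q) ⊆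
        Icc (α ((q + 1) % σ)) (β ((q + 1) % σ)) := by
      intro q hq
      rw [← hTeq q, ← hTeq ((q + 1) % σ), ← image_succ]
      exact tile_mod hσ1 hperσ (q + 1)
    have := phi_bound f hσ1 α β (fun q _ => hαβ q) hcovφ hdisjφ hstepφ
    omega
  subst hσ2
  have he0 : f^[0] '' W = W := by simp
  have hexact : ∀ r, r < 2 → ∀ k, f^[k] '' (f^[r] '' W) = f^[(r + k) % 2] '' W :=
    fun r hr k => tile_exact hc hm hmin hXu hfX (by omega) hWX hperσ
      hntil hdisjW hXW.symm hr k
  -- n is even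
  have hneven : n % 2 = 0 := by
    by_contra hodd
    have h2 : f^[n] '' (f^[0] '' W) = f^[(0 + n) % 2] '' W := hexact 0 (by omega) n
    rw [he0] at h2
    have h3 : (0 + n) % 2 = 1 := by omega
    rw [h3] at h2
    have h4 : f^[1] '' W ⊆ f^[0] '' W := by
      rw [he0, ← h2]
      exact hWper
    obtain ⟨α1, β1, hαβ1, hT1e⟩ := hntil 1
    have h5 := hdisjW 1 (by omega) 0 (by omega) (by omega)
    have h6 : (interior (f^[1] '' W)).Nonempty := by
      rw [hT1e, interior_Icc]
      exact nonempty_Ioo.2 hαβ1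
    obtain ⟨x, hx⟩ := h6
    apply Set.eq_empty_iff_forall_notMem.1 h5 x
    exact ⟨hx, interior_mono h4 hx⟩
  rcases Classical.em (J ⊆ W) with hJW | hJW
  · -- J = W
    have hJeqW : J = W := Set.Subset.antisymm hJW hWJ
    have hAs : f^[s] '' J = f^[s % 2] '' W := by
      have h1 := hexact 0 (by omega) s
      rw [he0] at h1
      rw [hJeqW, h1, Nat.zero_add]
    rcases Nat.mod_two_eq_zero_or_one s with hs0 | hs1
    · have hAsJ : f^[s] '' J = J := by
        rw [hAs, hs0, he0]
        exact hJeqW.symm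
      have hcontra : f^[n - s] '' J ⊆ J := by
        calc f^[n - s] '' J = f^[n - s] '' (f^[s] '' J) := by rw [hAsJ]
        _ = f^[n] '' J := by rw [← image_add, show n - s + s = n by omega]
        _ ⊆ J := hcyc.2.2.2.1
      exact hcyc.2.2.2.2.1 (n - s) (by omega) (by omega) hcontra
    · have h5 := hdisjW 0 (by omega) 1 (by omega) (by omega)
      rw [he0] at h5
      have hov := int_overlap_of_nt hW₀
      apply Set.nonempty_iff_ne_empty.1 hov
      rw [hAs, hs1, hJeqW]
      exact h5
  · -- J properly contains W
    set T1 := f^[1] '' W with hT1def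
    have hXdec : X = W ∪ T1 := by
      rw [← hXW]
      apply Set.Subset.antisymm
      · intro z hz
        simp only [Set.mem_iUnion] at hz
        obtain ⟨q, hq, hzq⟩ := hz
        have hq2 := Finset.mem_range.1 hq
        interval_cases q
        · left; simpa using hzq
        · right; exact hzq
      · intro z hz
        rcases hz with hz | hz
        · exact Set.mem_biUnion (Finset.mem_range.2 (by omega : (0:ℕ) < 2))
            (by simpa using hz)
        · exact Set.mem_biUnion (Finset.mem_range.2 (by omega : (1:ℕ) < 2)) hz
    obtain ⟨α₀, β₀, hαβ₀, hWe0⟩ := hntil 0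
    have hWe : W = Icc α₀ β₀ := by rw [← he0]; exact hWe0
    obtain ⟨α₁, β₁, hαβ₁, hT1e⟩ := hntil 1
    set K₁ := J ∩ T1 with hK₁def
    obtain ⟨x, hxJ, hxW⟩ : ∃ x, x ∈ J ∧ x ∉ W := by
      by_contra h
      push_neg at h
      exact hJW (fun z hz => h z hz)
    have haα : a ≤ α₀ ∧ β₀ ≤ b := by
      constructor
      · have h1 : α₀ ∈ J := hWJ (by rw [hWe]; exact ⟨le_refl _, hαβ₀.le⟩)
        rw [hJe] at h1; exact h1.1
      · have h1 : β₀ ∈ J := hWJ (by rw [hWe]; exact ⟨hαβ₀.le, le_refl _⟩)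
        rw [hJe] at h1; exact h1.2
    have hK₁mem : ∀ y, y ∈ J → y ∉ W → y ∈ K₁ := by
      intro y hyJ hyW
      refine ⟨hyJ, ?_⟩
      have h1 := hJX hyJ
      rw [hXdec] at h1
      rcases h1 with h | h
      · exact absurd h hyW
      · exact h
    have hK₁e : K₁ = Icc (max a α₁) (min b β₁) := by
      rw [hK₁def, hT1def, hJe, hT1e, Icc_inter_Icc]
    have hK₁nt : NT K₁ := by
      have hxJ' := hxJ
      rw [hJe] at hxJ'
      have hxW' := hxW
      rw [hWe] at hxW'
      simp only [Set.mem_Icc, not_and_or, not_le] at hxW'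
      rcases hxW' with hlt | hgt
      · set y := (x + α₀) / 2 with hy
        have hyJ : y ∈ J := by
          rw [hJe]
          constructor
          · have := hxJ'.1; rw [hy]; linarith
          · have h1 : α₀ ≤ b := le_trans hαβ₀.le haα.2
            rw [hy]; have := hxJ'.2; linarith
        have hyW : y ∉ W := by
          rw [hWe]
          intro hcon
          have := hcon.1
          rw [hy] at this
          linarith
        have hxK := hK₁mem x hxJ hxW
        have hyK := hK₁mem y hyJ hyW
        rw [hK₁e] at hxK hyK
        refine ⟨max a α₁, min b β₁, ?_, hK₁e⟩
        calc max a α₁ ≤ x := hxK.1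
        _ < y := by rw [hy]; linarith
        _ ≤ min b β₁ := hyK.2
      · set y := (β₀ + x) / 2 with hy
        have hyJ : y ∈ J := by
          rw [hJe]
          constructor
          · have h1 : a ≤ β₀ := le_trans haα.1 hαβ₀.le
            rw [hy]; linarith
          · have := hxJ'.2; rw [hy]; linarith
        have hyW : y ∉ W := by
          rw [hWe]
          intro hcon
          have := hcon.2
          rw [hy] at this
          linarith
        have hxK := hK₁mem x hxJ hxW
        have hyK := hK₁mem y hyJ hyW
        rw [hK₁e] at hxK hyK
        refine ⟨max a α₁, min b β₁, ?_, hK₁e⟩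
        calc max a α₁ ≤ y := hyK.1
        _ < x := by rw [hy]; linarith
        _ ≤ min b β₁ := hxK.2
    -- rigidity of the two tiles
    have hT1X : T1 ⊆ X := iter_sub_X hfX hWX 1
    have hT1u : T1 ⊆ unitI := hT1X.trans hXu
    have hT1exact : ∀ t : ℕ, f^[2 * t] '' T1 = T1 := by
      intro t
      exact tile_rigid hc hm hmin hXu hfX (by omega) hWX hperσ hntil hdisjW
        hXW.symm (show 1 < 2 by omega) t
    have hWexact : ∀ t : ℕ, f^[2 * t] '' W = W := by
      intro t
      have h1 := tile_rigid hc hm hmin hXu hfX (by omega) hWX hperσ hntil hdisjW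
        hXW.symm (show 0 < 2 by omega) t
      rw [he0] at h1
      exact h1
    have hK₁per : f^[n] '' K₁ ⊆ K₁ := by
      rintro z ⟨y, hy, rfl⟩
      constructor
      · exact hcyc.2.2.2.1 ⟨y, hy.1, rfl⟩
      · have hT1n : f^[n] '' T1 = T1 := by
          have h1 := hT1exact (n / 2)
          rw [show 2 * (n / 2) = n by omega] at h1
          exact h1
        rw [← hT1n]
        exact ⟨y, hy.2, rfl⟩
    set g := f^[2] with hgdef
    have hgc : ContinuousOn g unitI := (iter_cont hc hm 2).1
    have hgm : MapsTo g unitI unitI := (iter_cont hc hm 2).2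
    have hgit : ∀ t : ℕ, g^[t] = f^[2 * t] := fun t => by
      rw [hgdef, ← Function.iterate_mul]
    obtain ⟨hminT1, hgT1⟩ := tile_minimal hc hm hmin hXu hfX (by omega : (1:ℕ) ≤ 2)
      hWX hperσ hntil hdisjW hXW.symm (show 1 < 2 by omega)
    have hK₁T1 : K₁ ⊆ T1 := Set.inter_subset_right
    have hK₁gper : g^[n / 2] '' K₁ ⊆ K₁ := by
      rw [hgit, show 2 * (n / 2) = n by omega]
      exact hK₁per
    obtain ⟨τ, hτ1, hτN, hcycK₁, hK₁U⟩ := build_cycle (f := g) hminT1 hT1u hgT1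
      hK₁T1 hK₁nt (by omega : 1 ≤ n / 2) hK₁gper
    have hJdec : J = W ∪ K₁ := by
      apply Set.Subset.antisymm
      · intro z hz
        have h1 := hJX hz
        rw [hXdec] at h1
        rcases h1 with h | h
        · exact Or.inl h
        · exact Or.inr ⟨hz, h⟩
      · exact Set.union_subset hWJ Set.inter_subset_left
    have h2τ : 2 * τ = n := by
      have hle : 2 * τ ≤ n := by omega
      rcases lt_or_eq_of_le hle with hlt | heq
      · exfalso
        have hKτ : g^[τ] '' K₁ ⊆ K₁ := hcycK₁.2.2.2.1
        have hJper : f^[2 * τ] '' J ⊆ J := by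
          rw [hJdec, Set.image_union]
          apply Set.union_subset
          · rw [hWexact τ]
            exact Set.subset_union_left
          · rw [← hgit τ]
            exact hKτ.trans Set.subset_union_right
        exact hcyc.2.2.2.2.1 (2 * τ) (by omega) hlt hJper
      · exact heq
    rcases eq_or_lt_of_le hτ1 with hτeq | hτge2
    · -- τ = 1 : K₁ = T1, J = X, contradiction
      have hT1K : T1 = K₁ := by
        rw [hT1def, ← hK₁U, ← hτeq]
        simp
      have hJeqX : J = X := by
        apply Set.Subset.antisymm hJX
        rw [hXdec, hJdec, hT1K]
      have hcontra : f^[1] '' J ⊆ J := by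
        rw [Function.iterate_one, hJeqX]
        exact hfX
      exact hcyc.2.2.2.2.1 1 le_rfl (by omega) hcontra
    have hcycK₁' : IsCycleWith g K₁ T1 τ := by rw [hT1def, ← hK₁U]; exact hcycK₁
    have hτn : τ < n := by omega
    have hproperK := IH τ hτn g hgc hgm K₁ T1 hcycK₁' hminT1
    have hntilK : ∀ t, NT (g^[t] '' K₁) :=
      no_collapse hgc hgm hminT1 hT1u hgT1 hK₁T1 hK₁nt (by omega : 1 ≤ n / 2) hK₁gper
    have hτ2 : τ = 2 := by
      choose αk βk hαβk hTeqk using hntilK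
      have hcovk : Icc α₁ β₁ = ⋃ t ∈ Finset.range τ, Icc (αk t) (βk t) := by
        rw [← hT1e, ← hK₁U]
        exact Set.iUnion_congr fun t => Set.iUnion_congr fun _ => hTeqk t
      have hdisjk : ∀ i < τ, ∀ j < τ, i ≠ j →
          Ioo (αk i) (βk i) ∩ Ioo (αk j) (βk j) = ∅ := by
        intro i hi j hj hij
        have h1 := hproperK i hi j hj hij
        rw [hTeqk i, hTeqk j, interior_Icc, interior_Icc] at h1
        exact h1
      have hstepk : ∀ t < τ, g '' Icc (αk t) (βk t) ⊆
          Icc (αk ((t + 1) % τ)) (βk ((t + 1) % τ)) := by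
        intro t ht
        rw [← hTeqk t, ← hTeqk ((t + 1) % τ), ← image_succ]
        exact tile_mod hτ1 hcycK₁'.2.2.2.1 (t + 1)
      have := phi_bound g hτ1 αk βk (fun t _ => hαβk t) hcovk hdisjk hstepk
      omega
    have hn4 : n = 4 := by omega
    subst hτ2
    -- the four pieces
    set L₁ := f^[1] '' K₁ with hL₁def
    set K₂ := f^[2] '' K₁ with hK₂def
    set L₂ := f^[3] '' K₁ with hL₂def
    have hK₁X : K₁ ⊆ X := hK₁T1.trans hT1X
    have hntilKf : ∀ t, NT (f^[t] '' K₁) :=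
      no_collapse hc hm hmin hXu hfX hK₁X hK₁nt hn1 hK₁per
    have hgperK : g^[2] '' K₁ ⊆ K₁ := hcycK₁'.2.2.2.1
    -- exactness of the K-tiles under g
    have hgK : g^[2] '' K₁ = K₁ := by
      have h1 := tile_rigid hgc hgm hminT1 hT1u hgT1 (by omega : (1:ℕ) ≤ 2)
        hK₁T1 hgperK hntilK hproperK hK₁U.symm (show 0 < 2 by omega) 1
      simpa using h1
    have hf4K : f^[4] '' K₁ = K₁ := by
      have h1 := hgK
      rw [hgit 2] at h1
      exact h1
    have hg1K : g^[1] '' K₁ = K₂ := by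
      rw [hgit 1, hK₂def]
    -- T1 = K₁ ∪ K₂
    have hT1dec : T1 = K₁ ∪ K₂ := by
      rw [hT1def, ← hK₁U]
      apply Set.Subset.antisymm
      · intro z hz
        simp only [Set.mem_iUnion] at hz
        obtain ⟨t, ht, hzt⟩ := hz
        have ht2 := Finset.mem_range.1 ht
        interval_cases t
        · left; simpa using hzt
        · right; rw [← hg1K]; exact hzt
      · intro z hz
        rcases hz with hz | hz
        · exact Set.mem_biUnion (Finset.mem_range.2 (by omega : (0:ℕ) < 2))
            (by simpa using hz)
        · exact Set.mem_biUnion (Finset.mem_range.2 (by omega : (1:ℕ) < 2))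
            (by rw [hg1K]; exact hz)
    -- W = L₁ ∪ L₂
    have hfT1 : f '' T1 = W := by
      have h1 : f '' T1 = f^[2] '' W := by
        rw [hT1def, ← image_succ]
      rw [h1]
      have h2 := hWexact 1
      norm_num at h2
      exact h2
    have hfK₁L : f '' K₁ = L₁ := by
      rw [hL₁def]
      have := image_succ f 0 K₁
      simpa using this.symm
    have hfL₁K : f '' L₁ = K₂ := by
      rw [hL₁def, hK₂def, ← image_succ]
    have hfK₂L : f '' K₂ = L₂ := by
      rw [hK₂def, hL₂def, ← image_succ]
    have hfL₂K : f '' L₂ = K₁ := by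
      rw [hL₂def, ← image_succ]
      exact hf4K
    have hWdec : W = L₁ ∪ L₂ := by
      rw [← hfT1, hT1dec, Set.image_union, hfK₁L, hfK₂L]
    -- W is a minimal g-cycle
    obtain ⟨hminT0, hgT0⟩ := tile_minimal hc hm hmin hXu hfX (by omega : (1:ℕ) ≤ 2)
      hWX hperσ hntil hdisjW hXW.symm (show 0 < 2 by omega)
    rw [he0] at hminT0 hgT0
    have hL₁W : L₁ ⊆ W := by rw [hWdec]; exact Set.subset_union_left
    have hL₁nt : NT L₁ := hntilKf 1
    have hWu : W ⊆ unitI := hWX.trans hXu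
    -- g-period of L₁
    have hgL₁ : g^[1] '' L₁ = L₂ := by
      rw [hgit 1, hL₁def, hL₂def, ← image_add]
    have hgL₂ : g^[1] '' L₂ = L₁ := by
      rw [hgit 1, hL₂def, hL₁def, ← image_add]
      have h1 : 2 * 1 + 3 = 1 + 4 := by norm_num
      rw [h1, image_add, hf4K]
    have hgperL : g^[2] '' L₁ ⊆ L₁ := by
      have h1 : g^[2] '' L₁ = L₁ := by
        have h2 : g^[2] '' L₁ = g^[1] '' (g^[1] '' L₁) := by
          rw [← image_add]
        rw [h2, hgL₁, hgL₂]
      rw [h1]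
    obtain ⟨ρ, hρ1, hρ2, hcycL, hLU⟩ := build_cycle (f := g) hminT0 hWu hgT0
      hL₁W hL₁nt (by omega : (1:ℕ) ≤ 2) hgperL
    -- properness of the K-pair and cross-tile disjointness
    have hdisjK12 : interior K₁ ∩ interior K₂ = ∅ := by
      have h1 := hproperK 0 (by omega) 1 (by omega) (by omega)
      rw [hg1K] at h1
      simpa using h1
    have hWT1disj : interior W ∩ interior T1 = ∅ := by
      have h1 := hdisjW 0 (by omega) 1 (by omega) (by omega)
      rw [he0] at h1
      exact h1
    rcases eq_or_lt_of_le hρ1 with hρeq | hρge2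
    · -- ρ = 1 : L₁ = W, K₂ = T1 ⊇ K₁, contradiction
      have hL₁eqW : L₁ = W := by
        rw [← hLU, ← hρeq]
        simp
      have hK₂T1 : K₂ = T1 := by
        rw [← hfL₁K, hL₁eqW, hT1def]
        have := image_succ f 0 W
        simpa using this.symm
      obtain ⟨k₁a, k₁b, hk₁ab, hK₁icc⟩ := hK₁nt
      have hint : (interior K₁).Nonempty := by
        rw [hK₁icc, interior_Icc]
        exact nonempty_Ioo.2 hk₁ab
      obtain ⟨z, hz⟩ := hint
      apply Set.eq_empty_iff_forall_notMem.1 hdisjK12 z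
      refine ⟨hz, ?_⟩
      apply interior_mono _ hz
      rw [hK₂T1]
      exact hK₁T1
    · -- ρ = 2
      have hρeq : ρ = 2 := by omega
      subst hρeq
      have hcycL' : IsCycleWith g L₁ W 2 := by rw [← hLU]; exact hcycL
      have hproperL := IH 2 (by omega) g hgc hgm L₁ W hcycL' hminT0
      have hdisjL12 : interior L₁ ∩ interior L₂ = ∅ := by
        have h1 := hproperL 0 (by omega) 1 (by omega) (by omega)
        rw [hgL₁] at h1
        simpa using h1
      -- four-piece tiling of the interval X
      obtain ⟨u, v, huv, hXe⟩ := hXnt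
      set P : ℕ → Set ℝ := fun c =>
        if c = 0 then K₁ else if c = 1 then L₁ else if c = 2 then K₂ else L₂
        with hPdef
      have hPnt : ∀ c, NT (P c) := by
        intro c
        simp only [hPdef]
        split
        · exact hK₁nt
        · split
          · exact hL₁nt
          · split
            · exact hntilKf 2
            · exact hntilKf 3
      choose αp βp hαβp hPeq using hPnt
      have hP0 : P 0 = K₁ := by simp [hPdef]
      have hP1 : P 1 = L₁ := by simp [hPdef]
      have hP2 : P 2 = K₂ := by simp [hPdef]
      have hP3 : P 3 = L₂ := by simp [hPdef]
      have hXP : X = ⋃ c ∈ Finset.range 4, P c := by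
        rw [hXdec, hWdec, hT1dec]
        apply Set.Subset.antisymm
        · intro z hz
          rcases hz with (hz | hz) | (hz | hz)
          · exact Set.mem_biUnion (Finset.mem_range.2 (by omega : (1:ℕ) < 4))
              (by rw [hP1]; exact hz)
          · exact Set.mem_biUnion (Finset.mem_range.2 (by omega : (3:ℕ) < 4))
              (by rw [hP3]; exact hz)
          · exact Set.mem_biUnion (Finset.mem_range.2 (by omega : (0:ℕ) < 4))
              (by rw [hP0]; exact hz)
          · exact Set.mem_biUnion (Finset.mem_range.2 (by omega : (2:ℕ) < 4))
              (by rw [hP2]; exact hz)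
        · intro z hz
          simp only [Set.mem_iUnion] at hz
          obtain ⟨c, hc, hzc⟩ := hz
          have hc4 := Finset.mem_range.1 hc
          interval_cases c
          · rw [hP0] at hzc; exact Or.inr (Or.inl hzc)
          · rw [hP1] at hzc; exact Or.inl (Or.inl hzc)
          · rw [hP2] at hzc; exact Or.inr (Or.inr hzc)
          · rw [hP3] at hzc; exact Or.inl (Or.inr hzc)
      -- interior-disjointness of the four pieces
      have hintdisj : ∀ i < 4, ∀ j < 4, i ≠ j → interior (P i) ∩ interior (P j) = ∅ := by
        have hKT : ∀ A B : Set ℝ, A ⊆ T1 → B ⊆ W → interior A ∩ interior B = ∅ := by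
          intro A B hA hB
          apply Set.eq_empty_iff_forall_notMem.2
          intro z ⟨hz1, hz2⟩
          apply Set.eq_empty_iff_forall_notMem.1 hWT1disj z
          exact ⟨interior_mono hB hz2, interior_mono hA hz1⟩
        have hK₂T1' : K₂ ⊆ T1 := by rw [hT1dec]; exact Set.subset_union_right
        have hL₂W : L₂ ⊆ W := by rw [hWdec]; exact Set.subset_union_right
        intro i hi j hj hij
        interval_cases i <;> interval_cases j
        all_goals (try exact absurd rfl hij)
        · rw [hP0, hP1]; exact hKT K₁ L₁ hK₁T1 hL₁W
        · rw [hP0, hP2]; exact hdisjK12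
        · rw [hP0, hP3]; exact hKT K₁ L₂ hK₁T1 hL₂W
        · rw [hP1, hP0, Set.inter_comm]; exact hKT K₁ L₁ hK₁T1 hL₁W
        · rw [hP1, hP2, Set.inter_comm]; exact hKT K₂ L₁ hK₂T1' hL₁W
        · rw [hP1, hP3]; exact hdisjL12
        · rw [hP2, hP0, Set.inter_comm]; exact hdisjK12
        · rw [hP2, hP1]; exact hKT K₂ L₁ hK₂T1' hL₁W
        · rw [hP2, hP3]; exact hKT K₂ L₂ hK₂T1' hL₂W
        · rw [hP3, hP0, Set.inter_comm]; exact hKT K₁ L₂ hK₁T1 hL₂W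
        · rw [hP3, hP1, Set.inter_comm]; exact hdisjL12
        · rw [hP3, hP2, Set.inter_comm]; exact hKT K₂ L₂ hK₂T1' hL₂W
      -- the step map
      have hstep4 : ∀ c < 4, f '' P c ⊆ P ((c + 1) % 4) := by
        intro c hc
        interval_cases c
        · rw [hP0, show (0 + 1) % 4 = 1 by norm_num, hP1, hfK₁L]
        · rw [hP1, show (1 + 1) % 4 = 2 by norm_num, hP2, hfL₁K]
        · rw [hP2, show (2 + 1) % 4 = 3 by norm_num, hP3, hfK₂L]
        · rw [hP3, show (3 + 1) % 4 = 0 by norm_num, hP0, hfL₂K]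
      -- apply the tiling lemma : 4 ≤ 2, contradiction
      have hcov4 : Icc u v = ⋃ c ∈ Finset.range 4, Icc (αp c) (βp c) := by
        rw [← hXe, hXP]
        exact Set.iUnion_congr fun c => Set.iUnion_congr fun _ => hPeq c
      have hdisj4 : ∀ i < 4, ∀ j < 4, i ≠ j →
          Ioo (αp i) (βp i) ∩ Ioo (αp j) (βp j) = ∅ := by
        intro i hi j hj hij
        have h1 := hintdisj i hi j hj hij
        rw [hPeq i, hPeq j, interior_Icc, interior_Icc] at h1
        exact h1
      have hstep4' : ∀ c < 4, f '' Icc (αp c) (βp c) ⊆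
          Icc (αp ((c + 1) % 4)) (βp ((c + 1) % 4)) := by
        intro c hc
        rw [← hPeq c, ← hPeq ((c + 1) % 4)]
        exact hstep4 c hc
      have := phi_bound f (by omega : (1:ℕ) ≤ 4) αp βp (fun c _ => hαβp c)
        hcov4 hdisj4 hstep4'
      omega

/-- The main contradiction: a pair `(0,s)` with nontrivial intersection is impossible. -/
lemma main_aux {f : ℝ → ℝ} {J X : Set ℝ} {n : ℕ} (IH : IHpack n)
    (hc : ContinuousOn f unitI) (hm : MapsTo f unitI unitI)
    (hcyc : IsCycleWith f J X n) (hmin : IsMinimalCycle f X)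
    {s : ℕ} (hs1 : 1 ≤ s) (hsn : s < n) (hW₀ : NT (J ∩ f^[s] '' J)) : False := by
  classical
  have hXu := cyc_X_sub_unitI hc hm hcyc
  have hfX := cyc_fX_sub hcyc
  have hJX := cyc_J_sub hcyc
  have hn1 : 1 ≤ n := hcyc.2.2.1
  have hn2 : 2 ≤ n := by omega
  obtain ⟨a, b, hab, hJe⟩ := hcyc.1
  have hJnt : NT J := ⟨a, b, hab, hJe⟩
  have hJnt' : ∃ a' b' : ℝ, a' ≤ b' ∧ J = Icc a' b' := ⟨a, b, hab.le, hJe⟩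
  have hJu := hcyc.2.1
  -- X is closed
  have hXcl : IsClosed X := by
    rw [hcyc.2.2.2.2.2]
    apply Set.Finite.isClosed_biUnion (Finset.finite_toSet _)
    intro q _
    obtain ⟨c', d', hcd', himg, -⟩ := image_interval hc hm hJnt' hJu q
    rw [himg]
    exact isClosed_Icc
  -- the connected piece of J inside X
  have haX : a ∈ X := hJX (by rw [hJe]; exact ⟨le_refl _, hab.le⟩)
  set Y₀ := connectedComponentIn X a with hY₀def
  have hJY₀ : J ⊆ Y₀ := by
    apply IsPreconnected.subset_connectedComponentIn _ _ hJX
    · rw [hJe]; exact isPreconnected_Icc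
    · rw [hJe]; exact ⟨le_refl _, hab.le⟩
  have hY₀X : Y₀ ⊆ X := connectedComponentIn_subset _ _
  have hY₀conn : IsPreconnected Y₀ := isPreconnected_connectedComponentIn
  have hY₀cl : IsClosed Y₀ := by
    have h1 : closure Y₀ ⊆ Y₀ := by
      apply IsPreconnected.subset_connectedComponentIn hY₀conn.closure
      · exact subset_closure (mem_connectedComponentIn haX)
      · calc closure Y₀ ⊆ closure X := closure_mono hY₀X
        _ = X := hXcl.closure_eq
    exact isClosed_of_closure_subset h1
  have hY₀cpt : IsCompact Y₀ :=
    IsCompact.of_isClosed_subset isCompact_Icc hY₀cl (hY₀X.trans hXu)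
  have hY₀Icc : Y₀ = Icc (sInf Y₀) (sSup Y₀) :=
    eq_Icc_of_connected_compact ⟨⟨a, mem_connectedComponentIn haX⟩, hY₀conn⟩ hY₀cpt
  have hY₀nt : NT Y₀ := by
    refine ⟨sInf Y₀, sSup Y₀, ?_, hY₀Icc⟩
    exact nt_of_nt_subset hJnt (hY₀Icc ▸ hJY₀)
  -- absorption property
  have habsorb : ∀ C : Set ℝ, IsPreconnected C → C ⊆ X → (C ∩ Y₀).Nonempty → C ⊆ Y₀ := by
    intro C hCconn hCX ⟨y, hyC, hyY₀⟩
    have hyY₀' : y ∈ connectedComponentIn X a := hyY₀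
    have h1 : connectedComponentIn X y = connectedComponentIn X a :=
      (connectedComponentIn_eq hyY₀').symm
    have h2 : C ⊆ connectedComponentIn X y :=
      hCconn.subset_connectedComponentIn hyC hCX
    rw [h1] at h2
    exact h2
  have himconn : ∀ (q : ℕ) (C : Set ℝ), IsPreconnected C → C ⊆ X →
      IsPreconnected (f^[q] '' C) := by
    intro q C hC hCX
    exact hC.image _ ((iter_cont hc hm q).1.mono (hCX.trans hXu))
  -- period of Y₀
  have hY₀per : f^[n] '' Y₀ ⊆ Y₀ := by
    apply habsorb _ (himconn n Y₀ hY₀conn hY₀X) (iter_sub_X hfX hY₀X n)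
    refine ⟨f^[n] a, ⟨a, mem_connectedComponentIn haX, rfl⟩, ?_⟩
    apply hJY₀
    apply hcyc.2.2.2.1
    exact ⟨a, by rw [hJe]; exact ⟨le_refl _, hab.le⟩, rfl⟩
  have hex : ∃ q, 1 ≤ q ∧ f^[q] '' Y₀ ⊆ Y₀ := ⟨n, hn1, hY₀per⟩
  set m := Nat.find hex with hmdef
  obtain ⟨hm1, hmper⟩ := Nat.find_spec hex
  have hmn : m ≤ n := Nat.find_min' hex ⟨hn1, hY₀per⟩
  have hmleast : ∀ q, 1 ≤ q → q < m → ¬ f^[q] '' Y₀ ⊆ Y₀ := by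
    intro q hq1 hqm hcon
    exact Nat.find_min hex hqm ⟨hq1, hcon⟩
  rcases Nat.lt_or_ge m 2 with hm2 | hm2
  · -- m = 1 : X is an interval, go to case A
    have hm1' : m = 1 := by omega
    obtain ⟨p, hp1, hp2, hpcyc, hpX⟩ := build_cycle hmin hXu hfX hY₀X hY₀nt
      (le_refl 1) (by rw [← hm1']; exact hmper)
    have hp1' : p = 1 := by omega
    rw [hp1'] at hpX
    simp only [Finset.range_one, Finset.mem_singleton] at hpX
    have hXY₀ : X = Y₀ := by
      rw [← hpX]
      simp
    exact caseA IH hc hm hcyc hmin hs1 hsn hW₀ (by rw [hXY₀]; exact hY₀nt)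
  · -- m ≥ 2 : components case
    -- the m translates of Y₀ are pairwise disjoint
    have hdisjY : ∀ t, t < m → ∀ t', t' < m → t < t' →
        f^[t] '' Y₀ ∩ f^[t'] '' Y₀ = ∅ := by
      intro t ht t' ht' htt'
      by_contra hcon
      obtain ⟨z, hz1, hz2⟩ := Set.nonempty_iff_ne_empty.2 hcon
      set C := f^[t] '' Y₀ ∪ f^[t'] '' Y₀ with hC
      have hCconn : IsPreconnected C :=
        IsPreconnected.union z hz1 hz2 (himconn t Y₀ hY₀conn hY₀X)
          (himconn t' Y₀ hY₀conn hY₀X)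
      have hCX : C ⊆ X :=
        Set.union_subset (iter_sub_X hfX hY₀X t) (iter_sub_X hfX hY₀X t')
      have himC : f^[m - t'] '' C ⊆ Y₀ := by
        apply habsorb _ (himconn _ C hCconn hCX) (iter_sub_X hfX hCX _)
        have h1 : f^[m - t'] '' (f^[t'] '' Y₀) ⊆ f^[m - t'] '' C :=
          Set.image_mono Set.subset_union_right
        rw [← image_add, show m - t' + t' = m by omega] at h1
        obtain ⟨w, hw⟩ : Y₀.Nonempty := ⟨a, mem_connectedComponentIn haX⟩
        refine ⟨f^[m] w, h1 ⟨w, hw, rfl⟩, hmper ⟨w, hw, rfl⟩⟩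
      have hsubY : f^[m - t' + t] '' Y₀ ⊆ Y₀ := by
        rw [image_add]
        exact (Set.image_mono (Set.subset_union_left)).trans himC
      exact hmleast (m - t' + t) (by omega) (by omega) hsubY
    -- m divides n
    have hmdvd : m ∣ n := by
      have hr : f^[n % m] '' Y₀ ⊆ Y₀ := by
        apply habsorb _ (himconn _ Y₀ hY₀conn hY₀X) (iter_sub_X hfX hY₀X _)
        have h1 : f^[n] '' Y₀ ⊆ f^[n % m] '' Y₀ := by
          conv_lhs => rw [show n = n % m + m * (n / m) from (Nat.mod_add_div _ _).symm]
          rw [image_add]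
          exact Set.image_mono (per_mul hmper _)
        obtain ⟨w, hw⟩ : Y₀.Nonempty := ⟨a, mem_connectedComponentIn haX⟩
        exact ⟨f^[n] w, h1 ⟨w, hw, rfl⟩, hY₀per ⟨w, hw, rfl⟩⟩
      by_contra hcon
      have h1 : 1 ≤ n % m := by
        rcases Nat.eq_zero_or_pos (n % m) with h | h
        · exact absurd (Nat.dvd_of_mod_eq_zero h) hcon
        · exact h
      exact hmleast _ h1 (Nat.mod_lt _ (by omega)) hr
    set N := n / m with hNdef
    have hnmN : n = m * N := by
      rw [hNdef, Nat.mul_div_cancel' hmdvd]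
    have hN1 : 1 ≤ N := by
      rcases Nat.eq_zero_or_pos N with h | h
      · rw [h, Nat.mul_zero] at hnmN; omega
      · exact h
    have hNn : N < n := by
      have : 2 * N ≤ m * N := Nat.mul_le_mul_right _ hm2
      omega
    -- the cycle of J under g = f^[m]
    set g := f^[m] with hgdef
    have hgc : ContinuousOn g unitI := (iter_cont hc hm m).1
    have hgm : MapsTo g unitI unitI := (iter_cont hc hm m).2
    have hgit : ∀ t : ℕ, g^[t] = f^[m * t] := by
      intro t
      rw [hgdef, ← Function.iterate_mul]
    have hcycU : IsCycleWith g J (⋃ t ∈ Finset.range N, g^[t] '' J) N := by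
      refine ⟨hJnt, hJu, hN1, ?_, ?_, rfl⟩
      · rw [hgit, ← hnmN]
        exact hcyc.2.2.2.1
      · intro t ht1 htN hcon
        rw [hgit] at hcon
        have h1 : m * (t + 1) ≤ m * N := Nat.mul_le_mul (le_refl m) (Nat.succ_le_of_lt htN)
        have h2 : m * (t + 1) = m * t + m := by ring
        have h3 : 1 * 1 ≤ m * t := Nat.mul_le_mul (by omega) ht1
        exact hcyc.2.2.2.2.1 (m * t) (by omega) (by omega) hcon
    have hUY₀ : (⋃ t ∈ Finset.range N, g^[t] '' J) ⊆ Y₀ := by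
      intro y hy
      simp only [Set.mem_iUnion] at hy
      obtain ⟨t, -, hyt⟩ := hy
      rw [hgit] at hyt
      exact per_mul hmper t (Set.image_mono hJY₀ hyt)
    have hminU : IsMinimalCycle g (⋃ t ∈ Finset.range N, g^[t] '' J) := by
      refine ⟨⟨J, N, hcycU⟩, ?_⟩
      intro W hW hWU
      obtain ⟨K, τ, hcycK⟩ := hW
      have hKW : K ⊆ W := cyc_J_sub hcycK
      have hKY₀ : K ⊆ Y₀ := (hKW.trans hWU).trans hUY₀
      have hKX : K ⊆ X := hKY₀.trans hY₀X
      have hτ1 := hcycK.2.2.1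
      have hKper' : f^[m * τ] '' K ⊆ K := by
        rw [Function.iterate_mul]
        exact hcycK.2.2.2.1
      have hmτ : 1 ≤ m * τ := by
        have := Nat.mul_le_mul (show 1 ≤ m by omega) hτ1
        omega
      have hXK := X_eq_union hmin hXu hfX hKX hcycK.1 hmτ hKper'
      apply Set.Subset.antisymm hWU
      intro y hy
      have hyY₀ : y ∈ Y₀ := hUY₀ hy
      have hyX : y ∈ X := hY₀X hyY₀
      rw [hXK] at hyX
      simp only [Set.mem_iUnion] at hyX
      obtain ⟨q, hq, hyq⟩ := hyX
      have hq' := Finset.mem_range.1 hq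
      have hmod : q % m = 0 := by
        by_contra hne
        have h1 : y ∈ f^[q % m] '' Y₀ :=
          tile_mod (by omega) hmper q (Set.image_mono hKY₀ hyq)
        have h2 := hdisjY 0 (by omega) (q % m) (Nat.mod_lt _ (by omega)) (by omega)
        apply Set.eq_empty_iff_forall_notMem.1 h2 y
        exact ⟨by simpa using hyY₀, h1⟩
      obtain ⟨t, rfl⟩ := Nat.dvd_of_mod_eq_zero hmod
      have htτ : t < τ := by
        by_contra hge
        push_neg at hge
        have := Nat.mul_le_mul (le_refl m) hge
        omega
      rw [hcycK.2.2.2.2.2]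
      apply Set.mem_biUnion (Finset.mem_range.2 htτ)
      rw [hgit]
      exact hyq
    have hproper := IH N hNn g hgc hgm J _ hcycU hminU
    -- a point of the nontrivial overlap
    obtain ⟨p', q', hpq', hWe⟩ := hW₀
    have hwmem : p' ∈ J ∩ f^[s] '' J := by
      rw [hWe]; exact ⟨le_refl _, hpq'.le⟩
    -- m divides s
    have hsmod : s % m = 0 := by
      by_contra hne
      have h1 : p' ∈ f^[s % m] '' Y₀ :=
        tile_mod (by omega) hmper s (Set.image_mono hJY₀ hwmem.2)
      have h2 := hdisjY 0 (by omega) (s % m) (Nat.mod_lt _ (by omega)) (by omega)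
      apply Set.eq_empty_iff_forall_notMem.1 h2 p'
      exact ⟨by simpa using hJY₀ hwmem.1, h1⟩
    obtain ⟨sm, hsm⟩ := Nat.dvd_of_mod_eq_zero hsmod
    have hsm1 : 1 ≤ sm := by
      rcases Nat.eq_zero_or_pos sm with rfl | h
      · simp at hsm; omega
      · exact h
    have hsmN : sm < N := by
      by_contra hge
      push_neg at hge
      have := Nat.mul_le_mul (le_refl m) hge
      omega
    have hdisj0 := hproper 0 (by omega) sm (by omega) (by omega)
    have he1 : g^[0] '' J = J := by simp
    have he2 : g^[sm] '' J = f^[s] '' J := by rw [hgit, ← hsm]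
    rw [he1, he2] at hdisj0
    have hov := int_overlap_of_nt ⟨p', q', hpq', hWe⟩
    exact Set.nonempty_iff_ne_empty.1 hov hdisj0


/-- the full statement, by strong induction on the period. -/
lemma main_all (n : ℕ) : ∀ (f : ℝ → ℝ), ContinuousOn f unitI → MapsTo f unitI unitI →
    ∀ J X : Set ℝ, IsCycleWith f J X n → IsMinimalCycle f X →
    ∀ i, i < n → ∀ j, j < n → i ≠ j →
      interior (f^[i] '' J) ∩ interior (f^[j] '' J) = ∅ := by
  induction n using Nat.strong_induction_on with
  | _ n IH =>
  intro f hc hm J X hcyc hmin i hi j hj hij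
  by_contra hov
  have hovne : (interior (f^[i] '' J) ∩ interior (f^[j] '' J)).Nonempty :=
    Set.nonempty_iff_ne_empty.2 hov
  have IHp : IHpack n := fun p hp => IH p hp
  rcases lt_or_gt_of_ne hij with hlt | hgt
  · have hR := lemmaR hc hm hcyc hmin hj hlt hovne
    exact main_aux IHp hc hm hcyc hmin (by omega) (by omega) hR
  · have hovne' : (interior (f^[j] '' J) ∩ interior (f^[i] '' J)).Nonempty := by
      rw [Set.inter_comm] at hovne
      exact hovne
    have hR := lemmaR hc hm hcyc hmin hi hgt hovne'
    exact main_aux IHp hc hm hcyc hmin (by omega) (by omega) hR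

end S14

theorem statement14 (f : ℝ → ℝ) (hcont : ContinuousOn f unitI)
    (hmaps : MapsTo f unitI unitI)
    (J X : Set ℝ) (n : ℕ) (hcyc : IsCycleWith f J X n) (hmin : IsMinimalCycle f X) :
    ∀ i ∈ Finset.range n, ∀ j ∈ Finset.range n, i ≠ j →
      interior (f^[i] '' J) ∩ interior (f^[j] '' J) = ∅ := by
  intro i hi j hj hij
  exact S14.main_all n f hcont hmaps J X hcyc hmin i (Finset.mem_range.1 hi)
    j (Finset.mem_range.1 hj) hij
end
end

section
/- Let f be a continuous map of M = [0,1] into itself. Then any two minimal cycles of intervals for f either coincide or have disjoint interiors. -/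
open Set MeasureTheory Filter Topology

noncomputable section

lemma aux_iter_contOn {f : ℝ → ℝ} (hc : ContinuousOn f unitI)
    (hM : MapsTo f unitI unitI) (k : ℕ) : ContinuousOn (f^[k]) unitI := by
  induction k with
  | zero => simpa using continuousOn_id
  | succ k ih =>
    rw [Function.iterate_succ']
    exact hc.comp ih (hM.iterate k)

lemma aux_cycle_subset_unitI {f : ℝ → ℝ} {J X : Set ℝ} {n : ℕ}
    (hM : MapsTo f unitI unitI) (h : IsCycleWith f J X n) : X ⊆ unitI := by
  obtain ⟨_, hJ, _, _, _, hXdef⟩ := h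
  rw [hXdef]
  refine Set.iUnion₂_subset fun i _ => ?_
  exact (Set.image_mono hJ).trans ((hM.iterate i).image_subset)

lemma aux_cycle_image_subset {f : ℝ → ℝ} {J X : Set ℝ} {n : ℕ}
    (h : IsCycleWith f J X n) : ∀ k, f^[k] '' J ⊆ X := by
  obtain ⟨_, _, hn, hfn, _, hXdef⟩ := h
  intro k
  induction k using Nat.strong_induction_on with
  | _ k ih =>
    by_cases hk : k < n
    · rw [hXdef]
      intro x hx
      simp only [Set.mem_iUnion]
      exact ⟨k, Finset.mem_range.mpr hk, hx⟩
    · push_neg at hk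
      have h1 : f^[k] '' J = f^[k - n] '' (f^[n] '' J) := by
        rw [← Set.image_comp, ← Function.iterate_add, Nat.sub_add_cancel hk]
      have hkn : k - n < k := Nat.sub_lt (lt_of_lt_of_le hn hk) hn
      calc f^[k] '' J ⊆ f^[k - n] '' J := by
            rw [h1]; exact Set.image_mono hfn
        _ ⊆ X := ih _ hkn

lemma aux_iter_inv {f : ℝ → ℝ} {S : Set ℝ} {N : ℕ} (h : f^[N] '' S ⊆ S) (k : ℕ) :
    f^[N * k] '' S ⊆ S := by
  induction k with
  | zero => simp
  | succ k ih =>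
    have heq : f^[N * (k + 1)] '' S = f^[N * k] '' (f^[N] '' S) := by
      rw [← Set.image_comp, ← Function.iterate_add]
      ring_nf
    rw [heq]
    exact (Set.image_mono h).trans ih

theorem statement15 (f : ℝ → ℝ) (hcont : ContinuousOn f unitI)
    (hmaps : MapsTo f unitI unitI)
    (X Y : Set ℝ) (hX : IsMinimalCycle f X) (hY : IsMinimalCycle f Y) :
    X = Y ∨ interior X ∩ interior Y = ∅ := by
  classical
  by_cases hne : (interior X ∩ interior Y).Nonempty
  swap
  · exact Or.inr (Set.not_nonempty_iff_eq_empty.mp hne)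
  left
  obtain ⟨⟨J, n, hJX⟩, hXmin⟩ := hX
  obtain ⟨⟨K, m, hKY⟩, hYmin⟩ := hY
  obtain ⟨⟨aJ, bJ, habJ, hJdef⟩, hJsub, hn1, hfnJ, -, hXdef⟩ := id hJX
  obtain ⟨⟨aK, bK, habK, hKdef⟩, hKsub, hm1, hfmK, -, hYdef⟩ := id hKY
  -- each constituent interval is a closed interval
  have himJ : ∀ i : ℕ, f^[i] '' J =
      Icc (sInf (f^[i] '' J)) (sSup (f^[i] '' J)) := by
    intro i
    have hcJ : ContinuousOn (f^[i]) (Icc aJ bJ) := by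
      rw [← hJdef]
      exact (aux_iter_contOn hcont hmaps i).mono hJsub
    have := hcJ.image_Icc habJ.le
    rw [← hJdef] at this
    exact this
  have himK : ∀ i : ℕ, f^[i] '' K =
      Icc (sInf (f^[i] '' K)) (sSup (f^[i] '' K)) := by
    intro i
    have hcK : ContinuousOn (f^[i]) (Icc aK bK) := by
      rw [← hKdef]
      exact (aux_iter_contOn hcont hmaps i).mono hKsub
    have := hcK.image_Icc habK.le
    rw [← hKdef] at this
    exact this
  -- finite set of endpoints
  set E : Set ℝ := (⋃ i ∈ Finset.range n, {sInf (f^[i] '' J), sSup (f^[i] '' J)}) ∪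
      (⋃ i ∈ Finset.range m, {sInf (f^[i] '' K), sSup (f^[i] '' K)}) with hE
  have hEfin : E.Finite := by
    apply Set.Finite.union <;>
    exact Set.Finite.biUnion (Finset.finite_toSet _)
      (fun i _ => (Set.finite_singleton _).insert _)
  -- pick z in the open intersection avoiding endpoints
  obtain ⟨z0, hz0⟩ := hne
  have hopen : IsOpen (interior X ∩ interior Y) := isOpen_interior.inter isOpen_interior
  obtain ⟨ε, hε, hball⟩ := Metric.isOpen_iff.mp hopen z0 hz0
  have hIooSub : Ioo (z0 - ε) (z0 + ε) ⊆ interior X ∩ interior Y := by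
    rw [← Real.ball_eq_Ioo]; exact hball
  have hzEx : ((Ioo (z0 - ε) (z0 + ε)) \ E).Nonempty := by
    apply Set.Infinite.nonempty
    exact (Set.Ioo_infinite (by linarith)).diff hEfin
  obtain ⟨z, hzI, hzE⟩ := hzEx
  have hzXY := hIooSub hzI
  have hzX : z ∈ X := interior_subset hzXY.1
  have hzY : z ∈ Y := interior_subset hzXY.2
  rw [hXdef] at hzX
  rw [hYdef] at hzY
  simp only [Set.mem_iUnion] at hzX hzY
  obtain ⟨i, hi, hziJ⟩ := hzX
  obtain ⟨j, hj, hzjK⟩ := hzY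
  -- z is in the open interior of both intervals
  set I1 : Set ℝ := f^[i] '' J with hI1
  set I2 : Set ℝ := f^[j] '' K with hI2
  have hI1e : I1 = Icc (sInf I1) (sSup I1) := by rw [hI1]; exact himJ i
  have hI2e : I2 = Icc (sInf I2) (sSup I2) := by rw [hI2]; exact himK j
  have hz1 : sInf I1 < z ∧ z < sSup I1 := by
    have hmem : z ∈ Icc (sInf I1) (sSup I1) := hI1e ▸ hziJ
    have hne1 : z ≠ sInf I1 ∧ z ≠ sSup I1 := by
      constructor <;>
      · intro hzeq
        apply hzE
        rw [hE]
        apply Set.mem_union_left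
        simp only [Set.mem_iUnion]
        exact ⟨i, hi, by simp [hzeq, hI1]⟩
    exact ⟨lt_of_le_of_ne hmem.1 (Ne.symm hne1.1), lt_of_le_of_ne hmem.2 hne1.2⟩
  have hz2 : sInf I2 < z ∧ z < sSup I2 := by
    have hmem : z ∈ Icc (sInf I2) (sSup I2) := hI2e ▸ hzjK
    have hne2 : z ≠ sInf I2 ∧ z ≠ sSup I2 := by
      constructor <;>
      · intro hzeq
        apply hzE
        rw [hE]
        apply Set.mem_union_right
        simp only [Set.mem_iUnion]
        exact ⟨j, hj, by simp [hzeq, hI2]⟩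
    exact ⟨lt_of_le_of_ne hmem.1 (Ne.symm hne2.1), lt_of_le_of_ne hmem.2 hne2.2⟩
  -- the overlap interval L
  have hab : sInf I1 ⊔ sInf I2 < sSup I1 ⊓ sSup I2 := by
    simp only [sup_lt_iff, lt_inf_iff]
    exact ⟨⟨hz1.1.trans hz1.2, hz2.1.trans hz1.2⟩,
      ⟨hz1.1.trans hz2.2, hz2.1.trans hz2.2⟩⟩
  have hLI : Icc (sInf I1 ⊔ sInf I2) (sSup I1 ⊓ sSup I2) = I1 ∩ I2 := by
    conv_rhs => rw [hI1e, hI2e]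
    rw [Set.Icc_inter_Icc]
  set L : Set ℝ := Icc (sInf I1 ⊔ sInf I2) (sSup I1 ⊓ sSup I2) with hL
  have hLsub1 : L ⊆ I1 := by rw [hLI]; exact Set.inter_subset_left
  have hLsub2 : L ⊆ I2 := by rw [hLI]; exact Set.inter_subset_right
  -- invariance of I1 and I2
  have hinv1 : f^[n] '' I1 ⊆ I1 := by
    have : f^[n] '' I1 = f^[i] '' (f^[n] '' J) := by
      rw [hI1, ← Set.image_comp, ← Set.image_comp, ← Function.iterate_add,
        ← Function.iterate_add, Nat.add_comm]
    rw [this]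
    exact Set.image_mono hfnJ
  have hinv2 : f^[m] '' I2 ⊆ I2 := by
    have : f^[m] '' I2 = f^[j] '' (f^[m] '' K) := by
      rw [hI2, ← Set.image_comp, ← Set.image_comp, ← Function.iterate_add,
        ← Function.iterate_add, Nat.add_comm]
    rw [this]
    exact Set.image_mono hfmK
  -- L returns into itself after n*m steps
  have hN : f^[n * m] '' L ⊆ L := by
    rw [hLI]
    intro x hx
    obtain ⟨y, hy, hxy⟩ := hx
    refine ⟨aux_iter_inv hinv1 m ⟨y, hy.1, hxy⟩, ?_⟩
    have h2 : f^[m * n] '' I2 ⊆ I2 := aux_iter_inv hinv2 n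
    rw [Nat.mul_comm] at h2
    exact h2 ⟨y, hy.2, hxy⟩
  -- least period of L
  have hNex : ∃ p, 1 ≤ p ∧ f^[p] '' L ⊆ L :=
    ⟨n * m, Nat.one_le_iff_ne_zero.mpr (Nat.mul_ne_zero
      (Nat.one_le_iff_ne_zero.mp hn1) (Nat.one_le_iff_ne_zero.mp hm1)), hN⟩
  set p := Nat.find hNex with hp
  obtain ⟨hp1, hfp⟩ := Nat.find_spec hNex
  set Z : Set ℝ := ⋃ k ∈ Finset.range p, f^[k] '' L with hZ
  have hLunit : L ⊆ unitI := hLsub1.trans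
    ((aux_cycle_image_subset hJX i).trans (aux_cycle_subset_unitI hmaps hJX))
  have hZcyc : IsCycleWith f L Z p := by
    refine ⟨⟨_, _, hab, hL⟩, hLunit, hp1, hfp, ?_, rfl⟩
    intro q hq1 hqp hcon
    exact Nat.find_min hNex hqp ⟨hq1, hcon⟩
  -- Z is contained in both X and Y
  have hZsubX : Z ⊆ X := by
    rw [hZ]
    refine Set.iUnion₂_subset fun k _ => ?_
    have h1 : f^[k] '' L ⊆ f^[k] '' I1 := Set.image_mono hLsub1
    have h2 : f^[k] '' I1 = f^[k + i] '' J := by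
      rw [hI1, ← Set.image_comp, ← Function.iterate_add]
    exact h1.trans (h2 ▸ aux_cycle_image_subset hJX (k + i))
  have hZsubY : Z ⊆ Y := by
    rw [hZ]
    refine Set.iUnion₂_subset fun k _ => ?_
    have h1 : f^[k] '' L ⊆ f^[k] '' I2 := Set.image_mono hLsub2
    have h2 : f^[k] '' I2 = f^[k + j] '' K := by
      rw [hI2, ← Set.image_comp, ← Function.iterate_add]
    exact h1.trans (h2 ▸ aux_cycle_image_subset hKY (k + j))
  have hZX : Z = X := hXmin Z ⟨L, p, hZcyc⟩ hZsubX
  have hZY : Z = Y := hYmin Z ⟨L, p, hZcyc⟩ hZsubY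
  rw [← hZX, hZY]
end
end
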